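/- arXiv:2605.03965 — 11 statements merged into one kernel-verified Lean document; each statement's English description precedes it below -/
import Mathlib

section
/- For every integer ℓ ≥ 2, every non-null {P₅, K_{ℓ,ℓ}}-free graph G has a vertex v such that α(G[N_G[v]]) < 2ℓ. -/
open SimpleGraph

/-- A set of vertices is independent (pairwise nonadjacent). -/
def IndepSet {V : Type*} (G : SimpleGraph V) (s : Set V) : Prop :=
  s.Pairwise fun a b => ¬ G.Adj a b

/-- The independence number of the subgraph of `G` induced by `S`. -/
noncomputable def indepNumOn {V : Type*} (G : SimpleGraph V) (S : Set V) : ℕ :=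
  sSup {n | ∃ s : Finset V, ↑s ⊆ S ∧ IndepSet G ↑s ∧ s.card = n}

/-- The independence number of `G`. -/
noncomputable def indepNum {V : Type*} (G : SimpleGraph V) : ℕ :=
  indepNumOn G Set.univ

/-- `G` contains no induced subgraph isomorphic to `H`. -/
def Free {W V : Type*} (H : SimpleGraph W) (G : SimpleGraph V) : Prop :=
  IsEmpty (H ↪g G)

/-- The closed neighborhood of a vertex. -/
def closedNbhd {V : Type*} (G : SimpleGraph V) (v : V) : Set V :=
  insert v (G.neighborSet v)

/-- A tree-decomposition of `G` with nodes indexed by `ι`: a tree `T` together with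
bags such that every vertex appears in a nonempty connected collection of bags and
every edge is contained in some bag. -/
structure TreeDecomp {V : Type*} (G : SimpleGraph V) (ι : Type*) where
  tree : SimpleGraph ι
  isTree : tree.IsTree
  bag : ι → Set V
  subtree : ∀ v : V, (tree.induce {t | v ∈ bag t}).Connected
  covers : ∀ ⦃u v : V⦄, G.Adj u v → ∃ t, u ∈ bag t ∧ v ∈ bag t

section Helpers

variable {V : Type} {G : SimpleGraph V}


lemma indep_pairF {s : Finset V} (h : IndepSet G ↑s) {a b : V} (ha : a ∈ s) (hb : b ∈ s)
    (hadj : G.Adj a b) : False := by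
  rcases eq_or_ne a b with rfl | hne
  · exact G.irrefl hadj
  · exact h (Finset.mem_coe.mpr ha) (Finset.mem_coe.mpr hb) hne hadj

noncomputable def p5_embed (G : SimpleGraph V) {a b c d e : V}
    (hab : G.Adj a b) (hbc : G.Adj b c) (hcd : G.Adj c d) (hde : G.Adj d e)
    (hac : ¬ G.Adj a c) (had : ¬ G.Adj a d) (hae : ¬ G.Adj a e)
    (hbd : ¬ G.Adj b d) (hbe : ¬ G.Adj b e) (hce : ¬ G.Adj c e)
    (nac : a ≠ c) (nad : a ≠ d) (nae : a ≠ e) (nbd : b ≠ d) (nbe : b ≠ e) (nce : c ≠ e) :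
    pathGraph 5 ↪g G := by
  have nab := hab.ne; have nbc := hbc.ne; have ncd := hcd.ne; have nde := hde.ne
  have hca : ¬ G.Adj c a := fun h => hac h.symm
  have hda : ¬ G.Adj d a := fun h => had h.symm
  have hea : ¬ G.Adj e a := fun h => hae h.symm
  have hdb : ¬ G.Adj d b := fun h => hbd h.symm
  have heb : ¬ G.Adj e b := fun h => hbe h.symm
  have hec : ¬ G.Adj e c := fun h => hce h.symm
  have hba := hab.symm; have hcb := hbc.symm; have hdc := hcd.symm; have hed := hde.symm
  refine ⟨⟨![a,b,c,d,e], ?_⟩, ?_⟩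
  · intro i j hij
    fin_cases i <;> fin_cases j <;>
      simp_all [nab.symm, nbc.symm, ncd.symm, nde.symm, nac.symm, nad.symm, nae.symm,
        nbd.symm, nbe.symm, nce.symm]
  · intro i j
    show G.Adj (![a,b,c,d,e] i) (![a,b,c,d,e] j) ↔ _
    fin_cases i <;> fin_cases j <;>
      simp [pathGraph_adj, hab, hbc, hcd, hde, hac, had, hae, hbd, hbe, hce,
        hba, hcb, hdc, hed, hca, hda, hea, hdb, heb, hec] <;> decide

noncomputable def kll_embed {ℓ : ℕ} [DecidableEq V] (G : SimpleGraph V) {A B : Finset V}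
    (hAcard : A.card = ℓ) (hBcard : B.card = ℓ)
    (hAind : IndepSet G ↑A) (hBind : IndepSet G ↑B)
    (hadj : ∀ a ∈ A, ∀ b ∈ B, G.Adj a b) :
    completeBipartiteGraph (Fin ℓ) (Fin ℓ) ↪g G := by
  have hdisj : ∀ x, x ∈ A → x ∈ B → False := fun x hx hx' => G.irrefl (hadj x hx x hx')
  let eA : (A : Finset V) ≃ Fin ℓ := Finset.equivFinOfCardEq hAcard
  let eB : (B : Finset V) ≃ Fin ℓ := Finset.equivFinOfCardEq hBcard
  let f : Fin ℓ ⊕ Fin ℓ → V := Sum.elim (fun i => (eA.symm i : V)) (fun i => (eB.symm i : V))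
  have hfl : ∀ i, f (Sum.inl i) ∈ A := fun i => (eA.symm i).2
  have hfr : ∀ i, f (Sum.inr i) ∈ B := fun i => (eB.symm i).2
  refine ⟨⟨f, ?_⟩, ?_⟩
  · rintro (i | i) (j | j) hij
    · have : (eA.symm i) = (eA.symm j) := Subtype.coe_injective hij
      simpa using congrArg eA this
    · exact absurd (hij ▸ hfl i) (fun h => hdisj _ h (hfr j))
    · exact absurd (hij ▸ hfr i) (fun h => hdisj _ (hfl j) h)
    · have : (eB.symm i) = (eB.symm j) := Subtype.coe_injective hij
      simpa using congrArg eB this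
  · rintro (i | i) (j | j)
    · simp only [completeBipartiteGraph_adj]
      refine iff_of_false (fun h => indep_pairF hAind (hfl i) (hfl j) h) (by simp)
    · simp only [completeBipartiteGraph_adj]
      exact iff_of_true (hadj _ (hfl i) _ (hfr j)) (by simp)
    · simp only [completeBipartiteGraph_adj]
      exact iff_of_true ((hadj _ (hfl j) _ (hfr i)).symm) (by simp)
    · simp only [completeBipartiteGraph_adj]
      refine iff_of_false (fun h => indep_pairF hBind (hfr i) (hfr j) h) (by simp)

lemma key {V : Type} [Fintype V] [DecidableEq V] (ℓ : ℕ) (hℓ : 2 ≤ ℓ)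
    (G : SimpleGraph V) [DecidableRel G.Adj]
    (hP5 : _root_.Free (pathGraph 5) G)
    (hK : _root_.Free (completeBipartiteGraph (Fin ℓ) (Fin ℓ)) G)
    (S : Finset V) (hSind : IndepSet G ↑S)
    (hSmax : ∀ s : Finset V, IndepSet G ↑s → s.card ≤ S.card)
    (v : V) (hv : v ∈ S)
    (I : Finset V) (hIadj : ∀ x ∈ I, G.Adj v x) (hIind : IndepSet G ↑I)
    (hIcard : I.card = 2 * ℓ) : False := by
  -- members of I are not in S
  have hInS : ∀ x ∈ I, x ∉ S := fun x hx hxS => indep_pairF hSind hv hxS (hIadj x hx)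
  -- bound on the number of "exceptional" vertices
  have excA : ∀ T : Finset V, T ⊆ S → v ∉ T →
      (I.filter (fun x => S.filter (fun u => G.Adj x u) ⊆ insert v T)).card ≤ T.card + 1 := by
    intro T hTS hvT
    by_contra hcon
    push_neg at hcon
    set E := I.filter (fun x => S.filter (fun u => G.Adj x u) ⊆ insert v T) with hE
    have hET : insert v T ⊆ S := Finset.insert_subset hv hTS
    have hEI : E ⊆ I := Finset.filter_subset _ _
    have hdisj : Disjoint (S \ insert v T) E := by
      refine Finset.disjoint_left.mpr ?_
      intro x hxS hxE
      exact hInS x (hEI hxE) (Finset.mem_sdiff.mp hxS).1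
    set U := (S \ insert v T) ∪ E with hU
    have hUind : IndepSet G ↑U := by
      intro a ha b hb hne hadj
      rw [Finset.coe_union, Set.mem_union] at ha hb
      have key : ∀ x y : V, x ∈ E → y ∈ S \ insert v T → ¬ G.Adj x y := by
        intro x y hxE hyS hxy
        have hy := Finset.mem_sdiff.mp hyS
        have : y ∈ S.filter (fun u => G.Adj x u) := Finset.mem_filter.mpr ⟨hy.1, hxy⟩
        exact hy.2 ((Finset.mem_filter.mp hxE).2 this)
      rcases ha with ha | ha <;> rcases hb with hb | hb
      · exact indep_pairF hSind (Finset.mem_sdiff.mp ha).1 (Finset.mem_sdiff.mp hb).1 hadj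
      · exact key b a hb ha hadj.symm
      · exact key a b ha hb hadj
      · exact indep_pairF hIind (hEI ha) (hEI hb) hadj
    have hcard : U.card = S.card - (T.card + 1) + E.card := by
      rw [Finset.card_union_of_disjoint hdisj, Finset.card_sdiff_of_subset hET,
        Finset.card_insert_of_notMem hvT]
    have hle : T.card + 1 ≤ S.card := by
      calc T.card + 1 = (insert v T).card := (Finset.card_insert_of_notMem hvT).symm
        _ ≤ S.card := Finset.card_le_card hET
    have := hSmax U hUind
    omega
  -- the inductive step
  have step : ∀ T : Finset V, T ⊆ S → v ∉ T → T.card + 1 < 2 * ℓ →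
      (∀ x ∈ I, ¬ (S.filter (fun u => G.Adj x u) ⊆ insert v T) → ∀ t ∈ T, G.Adj x t) →
      ∃ t ∈ S, t ∉ insert v T ∧
        ∀ x ∈ I, ¬ (S.filter (fun u => G.Adj x u) ⊆ insert v (insert t T)) →
          ∀ u ∈ insert t T, G.Adj x u := by
    intro T hTS hvT hTsmall hTadj
    set X := I.filter (fun x => ¬ (S.filter (fun u => G.Adj x u) ⊆ insert v T)) with hX
    have hXI : X ⊆ I := Finset.filter_subset _ _
    have hXne : X.Nonempty := by
      have h1 : (I.filter (fun x => S.filter (fun u => G.Adj x u) ⊆ insert v T)).card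
          ≤ T.card + 1 := excA T hTS hvT
      have h2 : X.card + (I.filter (fun x => S.filter (fun u => G.Adj x u) ⊆ insert v T)).card
          = I.card := by
        have := Finset.card_filter_add_card_filter_not (s := I)
          (p := fun x => S.filter (fun u => G.Adj x u) ⊆ insert v T)
        rw [hX, Nat.add_comm]
        convert this using 3
        
      rw [← Finset.card_pos]
      omega
    -- the private S-neighborhoods outside insert v T
    set F : V → Finset V := fun x => (S \ insert v T).filter (fun u => G.Adj x u) with hF
    have hFne : ∀ x ∈ X, (F x).Nonempty := by
      intro x hx
      obtain ⟨u, huS, huT⟩ := Finset.not_subset.mp (Finset.mem_filter.mp hx).2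
      exact ⟨u, Finset.mem_filter.mpr ⟨Finset.mem_sdiff.mpr ⟨(Finset.mem_filter.mp huS).1, huT⟩,
        (Finset.mem_filter.mp huS).2⟩⟩
    -- pairwise comparability of the F x, via P5-freeness
    have hcomp : ∀ x ∈ X, ∀ y ∈ X, x ≠ y → F x ⊆ F y ∨ F y ⊆ F x := by
      intro x hx y hy hxy
      by_contra hcon
      push_neg at hcon
      obtain ⟨s, hsx, hsy⟩ := Finset.not_subset.mp hcon.1
      obtain ⟨t, hty, htx⟩ := Finset.not_subset.mp hcon.2
      have hsS := Finset.mem_sdiff.mp (Finset.mem_filter.mp hsx).1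
      have htS := Finset.mem_sdiff.mp (Finset.mem_filter.mp hty).1
      have hsadj : G.Adj x s := (Finset.mem_filter.mp hsx).2
      have htadj : G.Adj y t := (Finset.mem_filter.mp hty).2
      have hsnv : s ≠ v := fun h => hsS.2 (h ▸ Finset.mem_insert_self v T)
      have htnv : t ≠ v := fun h => htS.2 (h ▸ Finset.mem_insert_self v T)
      have hsny : ¬ G.Adj s y := by
        intro h
        exact hsy (Finset.mem_filter.mpr ⟨(Finset.mem_filter.mp hsx).1, h.symm⟩)
      have htnx : ¬ G.Adj x t := by
        intro h
        exact htx (Finset.mem_filter.mpr ⟨(Finset.mem_filter.mp hty).1, h⟩)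
      have hst : s ≠ t := by
        intro h
        exact hsy (h ▸ hty)
      -- path s - x - v - y - t
      refine hP5.elim (p5_embed G hsadj.symm (hIadj x (hXI hx)).symm (hIadj y (hXI hy))
        htadj ?_ ?_ ?_ ?_ ?_ ?_ ?_ ?_ ?_ ?_ ?_ ?_)
      · intro h; exact indep_pairF hSind hsS.1 hv h
      · exact hsny
      · intro h; exact indep_pairF hSind hsS.1 htS.1 h
      · intro h; exact indep_pairF hIind (hXI hx) (hXI hy) h
      · exact htnx
      · intro h; exact indep_pairF hSind hv htS.1 h
      · exact hsnv
      · exact fun h => hInS y (hXI hy) (h ▸ hsS.1)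
      · exact hst
      · exact hxy
      · exact fun h => hInS x (hXI hx) (h ▸ htS.1)
      · exact fun h => htnv h.symm
    -- choose x₁ with F x₁ of minimum size
    obtain ⟨x₁, hx₁X, hx₁min⟩ := Finset.exists_min_image X (fun x => (F x).card) hXne
    obtain ⟨t, htF⟩ := hFne x₁ hx₁X
    have htall : ∀ x ∈ X, t ∈ F x := by
      intro x hx
      rcases eq_or_ne x x₁ with rfl | hne
      · exact htF
      · rcases hcomp x₁ hx₁X x hx hne.symm with h | h
        · exact h htF
        · have := Finset.eq_of_subset_of_card_le h (hx₁min x hx)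
          exact this ▸ htF
    have htSd := Finset.mem_sdiff.mp (Finset.mem_filter.mp htF).1
    refine ⟨t, htSd.1, htSd.2, ?_⟩
    intro x hxI hxsub u hu
    have hxX : x ∈ X := by
      refine Finset.mem_filter.mpr ⟨hxI, fun h => hxsub (h.trans ?_)⟩
      intro w hw
      rcases Finset.mem_insert.mp hw with rfl | hw
      · exact Finset.mem_insert_self _ _
      · exact Finset.mem_insert_of_mem (Finset.mem_insert_of_mem hw)
    rcases Finset.mem_insert.mp hu with rfl | hu
    · exact (Finset.mem_filter.mp (htall x hxX)).2
    · exact hTadj x hxI (Finset.mem_filter.mp hxX).2 u hu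
  -- main induction
  have main : ∀ k, k ≤ ℓ - 1 → ∃ T : Finset V, T ⊆ S ∧ v ∉ T ∧ T.card = k ∧
      ∀ x ∈ I, ¬ (S.filter (fun u => G.Adj x u) ⊆ insert v T) → ∀ t ∈ T, G.Adj x t := by
    intro k
    induction k with
    | zero => exact fun _ => ⟨∅, Finset.empty_subset _, Finset.notMem_empty _, rfl,
        fun x _ _ t ht => absurd ht (Finset.notMem_empty t)⟩
    | succ k ih =>
      intro hk
      obtain ⟨T, hTS, hvT, hTcard, hTadj⟩ := ih (Nat.le_of_succ_le hk)
      obtain ⟨t, htS, htvT, hadj'⟩ := step T hTS hvT (by omega) hTadj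
      refine ⟨insert t T, Finset.insert_subset htS hTS, ?_, ?_, hadj'⟩
      · intro h
        rcases Finset.mem_insert.mp h with rfl | h
        · exact htvT (Finset.mem_insert_self _ _)
        · exact hvT h
      · rw [Finset.card_insert_of_notMem (fun h => htvT (Finset.mem_insert_of_mem h)), hTcard]
  -- conclude: build K_{ℓ,ℓ}
  obtain ⟨T, hTS, hvT, hTcard, hTadj⟩ := main (ℓ - 1) le_rfl
  have hEbound := excA T hTS hvT
  set R := I.filter (fun x => ¬ (S.filter (fun u => G.Adj x u) ⊆ insert v T)) with hR
  have hRcard : ℓ ≤ R.card := by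
    have h2 : R.card + (I.filter (fun x => S.filter (fun u => G.Adj x u) ⊆ insert v T)).card
        = I.card := by
      have h := Finset.card_filter_add_card_filter_not (s := I)
        (p := fun x => S.filter (fun u => G.Adj x u) ⊆ insert v T)
      rw [hR, Nat.add_comm]
      convert h using 3
    have hl1 : ℓ - 1 + 1 = ℓ := by omega
    rw [hTcard, hl1] at hEbound
    omega
  obtain ⟨B, hBR, hBcard⟩ := Finset.exists_subset_card_eq hRcard
  set A := insert v T with hA
  have hAS : A ⊆ S := Finset.insert_subset hv hTS
  have hAcard : A.card = ℓ := by
    rw [hA, Finset.card_insert_of_notMem hvT, hTcard]; omega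
  have hadjAB : ∀ a ∈ A, ∀ b ∈ B, G.Adj a b := by
    intro a ha b hb
    have hbR := hBR hb
    have hbI := Finset.mem_filter.mp hbR
    rcases Finset.mem_insert.mp ha with rfl | ha
    · exact hIadj b hbI.1
    · exact (hTadj b hbI.1 hbI.2 a ha).symm
  exact hK.elim (kll_embed G hAcard hBcard
    (fun a ha b hb hne hadj => indep_pairF hSind (hAS ha) (hAS hb) hadj)
    (fun a ha b hb hne hadj =>
      indep_pairF hIind (Finset.mem_of_mem_filter _ (hBR ha)) (Finset.mem_of_mem_filter _ (hBR hb)) hadj)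
    hadjAB)

end Helpers

/-- For every integer `ℓ ≥ 2`, every non-null `{P₅, K_{ℓ,ℓ}}`-free graph `G`
has a vertex `v` such that `α(G[N_G[v]]) < 2ℓ`. -/
theorem stmt_1 (ℓ : ℕ) (hℓ : 2 ≤ ℓ) {V : Type} [Fintype V] [Nonempty V]
    (G : SimpleGraph V)
    (hP5 : _root_.Free (pathGraph 5) G)
    (hK : _root_.Free (completeBipartiteGraph (Fin ℓ) (Fin ℓ)) G) :
    ∃ v : V, indepNumOn G (closedNbhd G v) < 2 * ℓ := by
  classical
  obtain ⟨S, hSmem, hSmax⟩ := Finset.exists_max_image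
    ((Finset.univ : Finset (Finset V)).filter (fun s : Finset V => IndepSet G ↑s)) (fun s : Finset V => s.card)
    ⟨∅, Finset.mem_filter.mpr ⟨Finset.mem_univ _, by simp [IndepSet]⟩⟩
  have hSind : IndepSet G ↑S := (Finset.mem_filter.mp hSmem).2
  have hSmax' : ∀ s : Finset V, IndepSet G ↑s → s.card ≤ S.card := fun s hs =>
    hSmax s (Finset.mem_filter.mpr ⟨Finset.mem_univ _, hs⟩)
  have hSpos : 0 < S.card := by
    have hone := hSmax' {Classical.arbitrary V} (by simp [IndepSet])
    rw [Finset.card_singleton] at hone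
    omega
  obtain ⟨v, hv⟩ := Finset.card_pos.mp hSpos
  refine ⟨v, ?_⟩
  have hbound : ∀ n ∈ {n | ∃ s : Finset V, ↑s ⊆ closedNbhd G v ∧ IndepSet G ↑s ∧ s.card = n},
      n ≤ 2 * ℓ - 1 := by
    rintro n ⟨s, hs1, hs2, rfl⟩
    by_contra hcon
    push_neg at hcon
    obtain ⟨I, hIs, hIcard⟩ := Finset.exists_subset_card_eq (show 2 * ℓ ≤ s.card by omega)
    have hIind : IndepSet G ↑I := hs2.mono (Finset.coe_subset.mpr hIs)
    have hIcl : ∀ x ∈ I, x = v ∨ G.Adj v x := by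
      intro x hx
      have : (x : V) ∈ closedNbhd G v := hs1 (Finset.mem_coe.mpr (hIs hx))
      rcases Set.mem_insert_iff.mp this with h | h
      · exact Or.inl h
      · exact Or.inr h
    have hIadj : ∀ x ∈ I, G.Adj v x := by
      intro x hx
      rcases hIcl x hx with rfl | h
      · exfalso
        obtain ⟨y, hy⟩ := Finset.exists_mem_ne (s := I) (by omega) x
        rcases hIcl y hy.1 with rfl | h
        · exact hy.2 rfl
        · exact indep_pairF hIind hx hy.1 h
      · exact h
    exact key ℓ hℓ G hP5 hK S hSind hSmax' v hv I hIadj hIind hIcard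
  have h0 : (0 : ℕ) ∈ {n | ∃ s : Finset V, ↑s ⊆ closedNbhd G v ∧ IndepSet G ↑s ∧ s.card = n} :=
    ⟨∅, by simp, by simp [IndepSet], rfl⟩
  have : indepNumOn G (closedNbhd G v) ≤ 2 * ℓ - 1 := csSup_le ⟨0, h0⟩ hbound
  omega
end

section
/- Let ℓ ≥ 2 be an integer, let G be a {P₅, K_{ℓ,ℓ}}-free graph, and let I be a maximum independent set in G. Then α(G[N_G[v]]) < 2ℓ for every v ∈ I. -/
open SimpleGraph

section Aux

variable {V : Type} [Fintype V] {G : SimpleGraph V}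

lemma indep_bddAbove (G : SimpleGraph V) (S : Set V) :
    BddAbove {n | ∃ s : Finset V, ↑s ⊆ S ∧ IndepSet G ↑s ∧ s.card = n} := by
  refine ⟨Fintype.card V, ?_⟩
  rintro n ⟨s, -, -, rfl⟩
  exact s.card_le_univ

lemma card_le_indepNum {s : Finset V} (hs : IndepSet G ↑s) : s.card ≤ _root_.indepNum G :=
  le_csSup (indep_bddAbove G Set.univ) ⟨s, Set.subset_univ _, hs, rfl⟩

lemma exists_indep_finset (S : Set V) {n : ℕ} (hn : n ≤ indepNumOn G S) :
    ∃ s : Finset V, ↑s ⊆ S ∧ IndepSet G ↑s ∧ s.card = n := by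
  have hne : {m | ∃ s : Finset V, ↑s ⊆ S ∧ IndepSet G ↑s ∧ s.card = m}.Nonempty :=
    ⟨0, ∅, by simp, by simp [IndepSet], by simp⟩
  obtain ⟨s, hsS, hsI, hcard⟩ := Nat.sSup_mem hne (indep_bddAbove G S)
  obtain ⟨t, hts, htcard⟩ := Finset.exists_subset_card_eq (s := s) (n := n) (by rw [hcard]; exact hn)
  exact ⟨t, (Finset.coe_subset.2 hts).trans hsS, hsI.mono (Finset.coe_subset.2 hts), htcard⟩

lemma p5_embedding {V : Type} {G : SimpleGraph V} {a b c d e : V}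
    (hab : G.Adj a b) (hbc : G.Adj b c) (hcd : G.Adj c d) (hde : G.Adj d e)
    (nac : ¬ G.Adj a c) (nad : ¬ G.Adj a d) (nae : ¬ G.Adj a e)
    (nbd : ¬ G.Adj b d) (nbe : ¬ G.Adj b e) (nce : ¬ G.Adj c e)
    (dac : a ≠ c) (dad : a ≠ d) (dae : a ≠ e)
    (dbd : b ≠ d) (dbe : b ≠ e) (dce : c ≠ e) :
    Nonempty (pathGraph 5 ↪g G) := by
  have dab : a ≠ b := fun h => G.irrefl (h ▸ hab)
  have dbc : b ≠ c := fun h => G.irrefl (h ▸ hbc)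
  have dcd : c ≠ d := fun h => G.irrefl (h ▸ hcd)
  have dde : d ≠ e := fun h => G.irrefl (h ▸ hde)
  refine ⟨⟨![a, b, c, d, e], ?_⟩, ?_⟩
  · intro i j hij
    fin_cases i <;> fin_cases j <;> first
      | rfl
      | (exfalso; revert hij; simp only [Matrix.cons_val_zero, Matrix.cons_val_one,
          Matrix.head_cons, Matrix.cons_val_succ]; first
            | exact dab | exact dac | exact dad | exact dae
            | exact dbc | exact dbd | exact dbe
            | exact dcd | exact dce | exact dde
            | exact fun h => dab h.symm | exact fun h => dac h.symm
            | exact fun h => dad h.symm | exact fun h => dae h.symm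
            | exact fun h => dbc h.symm | exact fun h => dbd h.symm
            | exact fun h => dbe h.symm | exact fun h => dcd h.symm
            | exact fun h => dce h.symm | exact fun h => dde h.symm)
  · intro i j
    fin_cases i <;> fin_cases j <;>
      simp only [Matrix.cons_val_zero, Matrix.cons_val_one, Matrix.head_cons,
        Matrix.cons_val_succ] <;>
      rw [pathGraph_adj] <;> first
        | (refine iff_of_true ?_ (by decide); first
            | assumption
            | exact hab.symm | exact hbc.symm | exact hcd.symm | exact hde.symm)
        | (refine iff_of_false ?_ (by decide); first
            | exact G.irrefl
            | assumption
            | exact fun h => nac h.symm | exact fun h => nad h.symm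
            | exact fun h => nae h.symm | exact fun h => nbd h.symm
            | exact fun h => nbe h.symm | exact fun h => nce h.symm)

end Aux

/-- Let `ℓ ≥ 2` be an integer, `G` a `{P₅, K_{ℓ,ℓ}}`-free graph, and `I`
a maximum independent set in `G`. Then `α(G[N_G[v]]) < 2ℓ` for every `v ∈ I`. -/
theorem stmt_4 (ℓ : ℕ) (hℓ : 2 ≤ ℓ) {V : Type} [Fintype V]
    (G : SimpleGraph V)
    (hP5 : _root_.Free (pathGraph 5) G)
    (hK : _root_.Free (completeBipartiteGraph (Fin ℓ) (Fin ℓ)) G)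
    (I : Finset V) (hI : IndepSet G ↑I) (hImax : I.card = _root_.indepNum G) :
    ∀ v ∈ I, indepNumOn G (closedNbhd G v) < 2 * ℓ := by
  classical
  intro v hv
  by_contra hcon
  push_neg at hcon
  obtain ⟨S, hSsub, hSind, hScard⟩ := exists_indep_finset (G := G) _ hcon
  -- every element of S is a neighbor of v
  have hadj : ∀ s ∈ S, G.Adj v s := by
    intro s hs
    rcases hSsub (Finset.mem_coe.2 hs) with rfl | h
    · exfalso
      obtain ⟨u, hu, hune⟩ := Finset.exists_mem_ne (s := S) (by omega) s
      rcases hSsub (Finset.mem_coe.2 hu) with rfl | h2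
      · exact hune rfl
      · exact hSind (Finset.mem_coe.2 hu) (Finset.mem_coe.2 hs) hune h2.symm
    · exact h
  have hSI : ∀ s ∈ S, s ∉ I := by
    intro s hs hsI
    have hne : v ≠ s := fun e => G.irrefl (e ▸ hadj s hs)
    exact hI hv hsI hne (hadj s hs)
  -- the trace of neighborhoods on I \ {v}
  set W : V → Finset V := fun s => (I.erase v).filter (fun w => G.Adj s w) with hW
  set f : V → ℕ := fun s => (W s).card with hf
  -- facts about membership in W
  have hWmem : ∀ s w, w ∈ W s ↔ (w ≠ v ∧ w ∈ I ∧ G.Adj s w) := by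
    intro s w
    simp [hW, Finset.mem_filter, Finset.mem_erase, and_assoc]
  -- chain property from P₅-freeness
  have chain : ∀ s ∈ S, ∀ s' ∈ S, W s ⊆ W s' ∨ W s' ⊆ W s := by
    intro s hs s' hs'
    by_contra hc
    push_neg at hc
    obtain ⟨w, hw, hwn⟩ := Finset.not_subset.1 hc.1
    obtain ⟨w', hw', hwn'⟩ := Finset.not_subset.1 hc.2
    have hss' : s ≠ s' := by rintro rfl; exact hwn hw
    obtain ⟨hwv, hwI, asw⟩ := (hWmem s w).1 hw
    obtain ⟨hwv', hwI', asw'⟩ := (hWmem s' w').1 hw'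
    have nsw' : ¬ G.Adj s w' := fun h => hwn' ((hWmem s w').2 ⟨hwv', hwI', h⟩)
    have nsw : ¬ G.Adj s' w := fun h => hwn ((hWmem s' w).2 ⟨hwv, hwI, h⟩)
    have hww' : w ≠ w' := fun e => hwn (e ▸ hw')
    have avs := hadj s hs
    have avs' := hadj s' hs'
    have nvw : ¬ G.Adj v w := hI hv hwI (Ne.symm hwv)
    have nvw' : ¬ G.Adj v w' := hI hv hwI' (Ne.symm hwv')
    have nww' : ¬ G.Adj w w' := hI hwI hwI' hww'
    have nss' : ¬ G.Adj s s' := hSind (Finset.mem_coe.2 hs) (Finset.mem_coe.2 hs') hss'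
    -- distinctness
    have d1 : w ≠ s := fun e => G.irrefl (e ▸ asw)
    have d2 : w ≠ s' := fun e => hSI s' hs' (e ▸ hwI)
    have d3 : s ≠ v := fun e => G.irrefl (e ▸ avs).symm
    have d4 : s' ≠ v := fun e => G.irrefl (e ▸ avs').symm
    have d5 : s ≠ w' := fun e => hSI s hs (e ▸ hwI')
    have d6 : s' ≠ w' := fun e => G.irrefl (e ▸ asw')
    -- build the P₅
    exact (p5_embedding asw.symm avs.symm avs' asw' (fun h => nvw h.symm)
      (fun h => nsw h.symm) nww' nss' nsw' nvw' hwv d2 hww' hss' d5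
      (Ne.symm hwv')).elim hP5.false
  have mono : ∀ s ∈ S, ∀ s' ∈ S, f s ≤ f s' → W s ⊆ W s' := by
    intro s hs s' hs' hfs
    rcases chain s hs s' hs' with h | h
    · exact h
    · exact (Finset.eq_of_subset_of_card_le h hfs).symm ▸ Finset.Subset.refl _
  -- the set of elements of S of "rank" less than ℓ
  set D : Finset V := S.filter (fun s => (S.filter fun u => f u < f s).card < ℓ) with hD
  have hDcard : ℓ ≤ D.card := by
    by_contra hc
    push_neg at hc
    have hne : (S \ D).Nonempty := by
      rw [Finset.sdiff_nonempty]
      intro hsub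
      have := Finset.card_le_card hsub
      omega
    obtain ⟨s₀, hs₀, hmin⟩ := Finset.exists_min_image (S \ D) f hne
    have hs₀S : s₀ ∈ S := (Finset.mem_sdiff.1 hs₀).1
    have hs₀D : s₀ ∉ D := (Finset.mem_sdiff.1 hs₀).2
    have hrank : ℓ ≤ (S.filter fun u => f u < f s₀).card := by
      by_contra hr
      push_neg at hr
      exact hs₀D (Finset.mem_filter.2 ⟨hs₀S, hr⟩)
    have hsub : (S.filter fun u => f u < f s₀) ⊆ D := by
      intro u hu
      rw [Finset.mem_filter] at hu
      by_contra huD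
      have := hmin u (Finset.mem_sdiff.2 ⟨hu.1, huD⟩)
      omega
    have := Finset.card_le_card hsub
    omega
  obtain ⟨T, hTD, hTcard⟩ := Finset.exists_subset_card_eq (s := D) hDcard
  have hTS : T ⊆ S := hTD.trans (Finset.filter_subset _ _)
  obtain ⟨t0, ht0T, hmax⟩ := Finset.exists_max_image T f
    (Finset.card_pos.1 (by omega))
  have ht0S : t0 ∈ S := hTS ht0T
  -- swap argument: I maximum gives many I-neighbors of T
  set B : Finset V := I.filter (fun w => ∃ t ∈ T, G.Adj t w) with hB
  have hBI : B ⊆ I := Finset.filter_subset _ _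
  have hswap : ℓ ≤ B.card := by
    set J : Finset V := (I \ B) ∪ T with hJ
    have hJind : IndepSet G ↑J := by
      intro a ha b hb hab
      simp only [hJ, Finset.coe_union, Set.mem_union, Finset.mem_coe,
        Finset.mem_sdiff] at ha hb
      rcases ha with ⟨haI, haB⟩ | haT
      · rcases hb with ⟨hbI, hbB⟩ | hbT
        · exact hI haI hbI hab
        · intro h
          exact haB (Finset.mem_filter.2 ⟨haI, b, hbT, h.symm⟩)
      · rcases hb with ⟨hbI, hbB⟩ | hbT
        · intro h
          exact hbB (Finset.mem_filter.2 ⟨hbI, a, haT, h⟩)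
        · exact hSind (Finset.mem_coe.2 (hTS haT)) (Finset.mem_coe.2 (hTS hbT)) hab
    have hdisj : Disjoint (I \ B) T :=
      Finset.disjoint_left.2 fun x hx hxT => hSI x (hTS hxT) (Finset.mem_sdiff.1 hx).1
    have hJcard : J.card = I.card - B.card + ℓ := by
      rw [hJ, Finset.card_union_of_disjoint hdisj, Finset.card_sdiff_of_subset hBI, hTcard]
    have hle : J.card ≤ I.card := by
      rw [hImax]; exact card_le_indepNum hJind
    have hBle := Finset.card_le_card hBI
    omega
  -- B is contained in {v} ∪ W t0
  have hBsub : B ⊆ insert v (W t0) := by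
    intro w hw
    obtain ⟨hwI, t, htT, hadj'⟩ := Finset.mem_filter.1 hw
    by_cases hwv : w = v
    · simp [hwv]
    · exact Finset.mem_insert_of_mem
        (mono t (hTS htT) t0 ht0S (hmax t htT) ((hWmem t w).2 ⟨hwv, hwI, hadj'⟩))
  have hWcard : ℓ - 1 ≤ (W t0).card := by
    have h1 := Finset.card_le_card hBsub
    have h2 := Finset.card_insert_le v (W t0)
    omega
  obtain ⟨W0, hW0, hW0card⟩ := Finset.exists_subset_card_eq (s := W t0) hWcard
  -- many elements of S dominate W t0
  set R : Finset V := S \ S.filter (fun u => f u < f t0) with hR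
  have hRcard : ℓ ≤ R.card := by
    have ht0D := hTD ht0T
    rw [hD, Finset.mem_filter] at ht0D
    have h1 : R.card = S.card - (S.filter (fun u => f u < f t0)).card := by
      rw [hR, Finset.card_sdiff_of_subset (Finset.filter_subset _ _)]
    have h2 := Finset.card_le_card (Finset.filter_subset (fun u => f u < f t0) S)
    omega
  obtain ⟨X, hXR, hXcard⟩ := Finset.exists_subset_card_eq (s := R) hRcard
  have hXS : X ⊆ S := fun x hx => (Finset.mem_sdiff.1 (hXR hx)).1
  have hXge : ∀ x ∈ X, f t0 ≤ f x := by
    intro x hx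
    have hx' := Finset.mem_sdiff.1 (hXR hx)
    exact not_lt.1 fun hh => hx'.2 (Finset.mem_filter.2 ⟨hx'.1, hh⟩)
  set Y : Finset V := insert v W0 with hY
  have hW0mem : ∀ w ∈ W0, w ≠ v ∧ w ∈ I ∧ G.Adj t0 w := fun w h => (hWmem t0 w).1 (hW0 h)
  have hvW0 : v ∉ W0 := fun h => (hW0mem v h).1 rfl
  have hYcard : Y.card = ℓ := by
    rw [hY, Finset.card_insert_of_notMem hvW0, hW0card]
    omega
  have hYI : ∀ y ∈ Y, y ∈ I := by
    intro y hy
    rcases Finset.mem_insert.1 hy with rfl | h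
    · exact hv
    · exact (hW0mem y h).2.1
  have cross : ∀ x ∈ X, ∀ y ∈ Y, G.Adj x y := by
    intro x hx y hy
    rcases Finset.mem_insert.1 hy with rfl | hyW
    · exact (hadj x (hXS hx)).symm
    · have hsub : W t0 ⊆ W x := mono t0 ht0S x (hXS hx) (hXge x hx)
      exact ((hWmem x y).1 (hsub (hW0 hyW))).2.2
  have hXY : ∀ x ∈ X, x ∉ Y := fun x hx hxY => hSI x (hXS hx) (hYI x hxY)
  -- build the K_{ℓ,ℓ}
  let eX : Fin ℓ → V := fun i => (X.equivFin.symm (Fin.cast hXcard.symm i) : V)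
  let eY : Fin ℓ → V := fun i => (Y.equivFin.symm (Fin.cast hYcard.symm i) : V)
  have heX : ∀ i, eX i ∈ X := fun i => (X.equivFin.symm (Fin.cast hXcard.symm i)).2
  have heY : ∀ i, eY i ∈ Y := fun i => (Y.equivFin.symm (Fin.cast hYcard.symm i)).2
  have heXinj : Function.Injective eX := by
    intro i j h
    have := X.equivFin.symm.injective (Subtype.ext h)
    exact Fin.cast_injective _ this
  have heYinj : Function.Injective eY := by
    intro i j h
    have := Y.equivFin.symm.injective (Subtype.ext h)
    exact Fin.cast_injective _ this
  refine hK.false ⟨⟨Sum.elim eX eY, ?_⟩, ?_⟩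
  · rintro (i | i) (j | j) h
    · exact congrArg Sum.inl (heXinj h)
    · exact absurd (show eX i ∈ Y by rw [show eX i = eY j from h]; exact heY j)
        (hXY _ (heX i))
    · exact absurd (show eX j ∈ Y by rw [← show eY i = eX j from h]; exact heY i)
        (hXY _ (heX j))
    · exact congrArg Sum.inr (heYinj h)
  · rintro (i | i) (j | j) <;> erw [Function.Embedding.coeFn_mk] <;> simp only [RelEmbedding.coe_mk, Function.Embedding.coeFn_mk, Sum.elim_inl, Sum.elim_inr,
      completeBipartiteGraph_adj, Sum.isLeft_inl, Sum.isRight_inl, Sum.isLeft_inr,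
      Sum.isRight_inr]
    · constructor
      · intro h
        rcases eq_or_ne (eX i) (eX j) with e | e
        · exact absurd (e ▸ h) (G.irrefl)
        · exact absurd h (hSind (Finset.mem_coe.2 (hXS (heX i)))
            (Finset.mem_coe.2 (hXS (heX j))) e)
      · simp
    · simp [cross _ (heX i) _ (heY j)]
    · simp [(cross _ (heX j) _ (heY i)).symm]
    · constructor
      · intro h
        rcases eq_or_ne (eY i) (eY j) with e | e
        · exact absurd (e ▸ h) (G.irrefl)
        · exact absurd h (hI (Finset.mem_coe.2 (hYI _ (heY i)))
            (Finset.mem_coe.2 (hYI _ (heY j))) e)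
      · simp
end

section
/- Let d ≥ 2 be an integer and let 𝒢 be a hereditary graph class with d-dominated balanced separators. Then, for every integer ℓ ≥ 2, every K_{2,ℓ}-free graph G from 𝒢 with n ≥ 2 vertices has a vertex v such that α(G[N_G[v]]) ≤ dℓ·log₂ n. -/
open SimpleGraph

/-- The closed neighborhood of a set of vertices. -/
def closedNbhdSet {V : Type*} (G : SimpleGraph V) (X : Set V) : Set V :=
  ⋃ x ∈ X, closedNbhd G x

lemma indepSet_mono {V : Type*} {G : SimpleGraph V} {s t : Set V}
    (h : IndepSet G s) (hts : t ⊆ s) : IndepSet G t := Set.Pairwise.mono hts h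

lemma common_nbrs_card_le {V : Type*} {ℓ : ℕ} (hℓ : 2 ≤ ℓ) {G : SimpleGraph V}
    (hK : _root_.Free (completeBipartiteGraph (Fin 2) (Fin ℓ)) G)
    {a b : V} (hne : a ≠ b) (hnadj : ¬ G.Adj a b)
    {s : Finset V} (hs : ∀ w ∈ s, G.Adj a w ∧ G.Adj b w)
    (hind : IndepSet G ↑s) : s.card ≤ ℓ - 1 := by
  by_contra hcard
  push_neg at hcard
  have hcard' : ℓ ≤ s.card := by omega
  obtain ⟨t, hts, htcard⟩ := s.exists_subset_card_eq hcard'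
  have e : Fin ℓ ≃ ↥t := (t.equivFinOfCardEq htcard).symm
  have htwo : ∀ i : Fin 2, i = 0 ∨ i = 1 := by decide
  have hmem : ∀ j : Fin ℓ, (↑(e j) : V) ∈ s := fun j => hts (e j).2
  have hanots : a ∉ s := fun h => G.irrefl (hs a h).1
  have hbnots : b ∉ s := fun h => G.irrefl (hs b h).2
  set f : Fin 2 ⊕ Fin ℓ → V := Sum.elim ![a, b] (fun j => ↑(e j)) with hf
  have hfa : f (Sum.inl 0) = a := rfl
  have hfb : f (Sum.inl 1) = b := rfl
  have hfe : ∀ j : Fin ℓ, f (Sum.inr j) = ↑(e j) := fun _ => rfl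
  have hinj : Function.Injective f := by
    intro x y hxy
    match x, y with
    | Sum.inl i, Sum.inl j =>
      rcases htwo i with hi | hi <;> rcases htwo j with hj | hj <;> subst hi <;> subst hj <;>
        first
        | rfl
        | (rw [hfa, hfb] at hxy; exact absurd hxy hne)
        | (rw [hfb, hfa] at hxy; exact absurd hxy.symm hne)
    | Sum.inl i, Sum.inr j =>
      exfalso
      rcases htwo i with hi | hi <;> subst hi <;> rw [hfe] at hxy
      · rw [hfa] at hxy; exact hanots (hxy ▸ hmem j)
      · rw [hfb] at hxy; exact hbnots (hxy ▸ hmem j)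
    | Sum.inr j, Sum.inl i =>
      exfalso
      rcases htwo i with hi | hi <;> subst hi <;> rw [hfe] at hxy
      · rw [hfa] at hxy; exact hanots (hxy.symm ▸ hmem j)
      · rw [hfb] at hxy; exact hbnots (hxy.symm ▸ hmem j)
    | Sum.inr i, Sum.inr j =>
      rw [hfe, hfe] at hxy
      exact congrArg Sum.inr (e.injective (Subtype.ext hxy))
  have hrel : ∀ x y, G.Adj (f x) (f y) ↔ (completeBipartiteGraph (Fin 2) (Fin ℓ)).Adj x y := by
    intro x y
    match x, y with
    | Sum.inl i, Sum.inl j =>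
      refine iff_of_false ?_ (by simp)
      intro h
      rcases htwo i with hi | hi <;> rcases htwo j with hj | hj <;> subst hi <;> subst hj <;>
        simp only [hfa, hfb] at h
      · exact G.irrefl h
      · exact hnadj h
      · exact hnadj h.symm
      · exact G.irrefl h
    | Sum.inl i, Sum.inr j =>
      refine iff_of_true ?_ (by simp)
      rcases htwo i with hi | hi <;> subst hi <;> rw [hfe]
      · rw [hfa]; exact (hs _ (hmem j)).1
      · rw [hfb]; exact (hs _ (hmem j)).2
    | Sum.inr j, Sum.inl i =>
      refine iff_of_true ?_ (by simp)
      rcases htwo i with hi | hi <;> subst hi <;> rw [hfe]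
      · rw [hfa]; exact (hs _ (hmem j)).1.symm
      · rw [hfb]; exact (hs _ (hmem j)).2.symm
    | Sum.inr i, Sum.inr j =>
      refine iff_of_false ?_ (by simp)
      rw [hfe, hfe]
      intro h
      by_cases hij : (↑(e i) : V) = ↑(e j)
      · rw [hij] at h; exact G.irrefl h
      · exact hind (hmem i) (hmem j) hij h
  exact hK.false ⟨⟨f, hinj⟩, hrel _ _⟩

lemma free_induce {W V : Type*} {H : SimpleGraph W} {G : SimpleGraph V}
    (h : _root_.Free H G) (S : Set V) : _root_.Free H (G.induce S) :=
  ⟨fun e => h.false ((SimpleGraph.Embedding.induce S).comp e)⟩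

lemma logb_ge_one {n : ℕ} (hn : 2 ≤ n) : (1:ℝ) ≤ Real.logb 2 n := by
  rw [← Real.logb_self_eq_one (b := 2) (by norm_num)]
  exact Real.logb_le_logb_of_le (by norm_num) (by norm_num) (by exact_mod_cast hn)

lemma triv_bound {d ℓ n : ℕ} (hn : 2 ≤ n) {c : ℝ} (hc : c ≤ (d:ℝ) * ℓ) :
    c ≤ (d:ℝ) * ℓ * Real.logb 2 n := by
  have h1 := logb_ge_one hn
  have h0 : (0:ℝ) ≤ (d:ℝ) * ℓ := by positivity
  nlinarith

lemma part_bound {V : Type} {d ℓ : ℕ} (hℓ : 2 ≤ ℓ) {G : SimpleGraph V}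
    (hK : _root_.Free (completeBipartiteGraph (Fin 2) (Fin ℓ)) G)
    {X : Set V} (hXfin : X.Finite) (hX : X.ncard ≤ d) {v : V} (hv : v ∉ closedNbhdSet G X)
    {I : Finset V} (hadj : ∀ w ∈ I, G.Adj v w) (hmemX : ∀ w ∈ I, w ∈ closedNbhdSet G X)
    (hind : IndepSet G ↑I) : I.card ≤ d * (ℓ - 1) := by
  classical
  have hsub : I ⊆ hXfin.toFinset.biUnion
      (fun x => I.filter (fun w => w ∈ closedNbhd G x)) := by
    intro w hw
    obtain ⟨x, hx, hwx⟩ := Set.mem_iUnion₂.1 (hmemX w hw)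
    exact Finset.mem_biUnion.2 ⟨x, hXfin.mem_toFinset.2 hx, Finset.mem_filter.2 ⟨hw, hwx⟩⟩
  have hper : ∀ x ∈ hXfin.toFinset,
      (I.filter (fun w => w ∈ closedNbhd G x)).card ≤ ℓ - 1 := by
    intro x hx
    have hxX : x ∈ X := hXfin.mem_toFinset.1 hx
    have hvx : v ∉ closedNbhd G x := fun h => hv (Set.mem_iUnion₂.2 ⟨x, hxX, h⟩)
    have hvnex : v ≠ x := fun h => hvx (by rw [h]; exact Set.mem_insert _ _)
    have hvnadj : ¬ G.Adj v x := fun h =>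
      hvx (Set.mem_insert_iff.2 (Or.inr (G.adj_symm h)))
    refine common_nbrs_card_le hℓ hK hvnex hvnadj (fun w hw => ?_)
      (indepSet_mono hind (by exact_mod_cast Finset.filter_subset _ I))
    obtain ⟨hwI, hwx⟩ := Finset.mem_filter.1 hw
    refine ⟨hadj w hwI, ?_⟩
    rcases Set.mem_insert_iff.1 hwx with h | h
    · exact absurd (h ▸ hadj w hwI) hvnadj
    · exact (G.adj_symm h).symm
  calc I.card ≤ (hXfin.toFinset.biUnion
        (fun x => I.filter (fun w => w ∈ closedNbhd G x))).card := Finset.card_le_card hsub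
    _ ≤ ∑ x ∈ hXfin.toFinset, (I.filter (fun w => w ∈ closedNbhd G x)).card :=
        Finset.card_biUnion_le
    _ ≤ hXfin.toFinset.card • (ℓ - 1) := Finset.sum_le_card_nsmul _ _ _ hper
    _ = hXfin.toFinset.card * (ℓ - 1) := by rw [smul_eq_mul]
    _ ≤ d * (ℓ - 1) := by
        have := (Set.ncard_eq_toFinset_card X hXfin).symm.trans_le hX
        exact Nat.mul_le_mul_right _ this

lemma lift_bound {V : Type} {G : SimpleGraph V} {S : Set V} (P : V → Prop) (v : ↥S) (B : ℝ)
    (h₁ : ∀ J : Finset ↥S, (∀ j ∈ J, (G.induce S).Adj v j ∧ P ↑j) →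
      IndepSet (G.induce S) ↑J → (J.card : ℝ) ≤ B) :
    ∀ I : Finset V, (∀ w ∈ I, G.Adj ↑v w ∧ w ∈ S ∧ P w) → IndepSet G ↑I →
      (I.card : ℝ) ≤ B := by
  classical
  intro I hI hind
  set J := I.subtype (· ∈ S) with hJ
  have hJcard : J.card = I.card := by
    rw [hJ, Finset.card_subtype, Finset.filter_true_of_mem (fun w hw => (hI w hw).2.1)]
  have hmemJ : ∀ j : ↥S, j ∈ J → (↑j : V) ∈ I := by
    intro j hj; exact Finset.mem_subtype.1 hj
  have hres := h₁ J (fun j hj => ⟨(hI _ (hmemJ j hj)).1, (hI _ (hmemJ j hj)).2.2⟩)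
    (fun a ha b hb hab => by
      have : ¬ G.Adj ↑a ↑b := hind (hmemJ a ha) (hmemJ b hb) (fun h => hab (Subtype.ext h))
      exact fun h => this h)
  rwa [hJcard] at hres

lemma caseA_ineq {d ℓ c n : ℕ} (hd : 2 ≤ d) (hℓ : 2 ≤ ℓ) (hc : 2 ≤ c) (h2c : 2 * c ≤ n) :
    (d:ℝ) * ℓ * Real.logb 2 c + (d:ℝ) * ((ℓ:ℝ) - 1) ≤ (d:ℝ) * ℓ * Real.logb 2 n := by
  have hcpos : (0:ℝ) < (c:ℝ) := by
    have : (0:ℕ) < c := by omega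
    exact_mod_cast this
  have h1 : Real.logb 2 ((2:ℝ) * c) ≤ Real.logb 2 n := by
    apply Real.logb_le_logb_of_le (by norm_num) (by positivity)
    have : ((2 * c : ℕ) : ℝ) ≤ (n : ℝ) := by exact_mod_cast h2c
    push_cast at this
    linarith
  rw [Real.logb_mul (by norm_num) (ne_of_gt hcpos), Real.logb_self_eq_one (by norm_num)] at h1
  have hd' : (2:ℝ) ≤ (d:ℝ) := by exact_mod_cast hd
  have hl' : (2:ℝ) ≤ (ℓ:ℝ) := by exact_mod_cast hℓ
  have hdl : (0:ℝ) ≤ (d:ℝ) * ℓ := by positivity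
  nlinarith [mul_le_mul_of_nonneg_left h1 hdl]

lemma caseB_ineq {d ℓ m n : ℕ} (hd : 2 ≤ d) (hℓ : 2 ≤ ℓ) (hm : 2 ≤ m)
    (hmn : d * m ≤ (d - 1) * n) :
    (d:ℝ) * ℓ * Real.logb 2 m + ((ℓ:ℝ) - 1) ≤ (d:ℝ) * ℓ * Real.logb 2 n := by
  have hd' : (2:ℝ) ≤ (d:ℝ) := by exact_mod_cast hd
  have hl' : (2:ℝ) ≤ (ℓ:ℝ) := by exact_mod_cast hℓ
  set D : ℝ := (d:ℝ) with hD
  set k : ℝ := D - 1 with hk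
  have hk1 : (1:ℝ) ≤ k := by rw [hk]; linarith
  have hkpos : (0:ℝ) < k := by linarith
  have hDpos : (0:ℝ) < D := by linarith
  have hmn' : D * m ≤ k * n := by
    have : ((d * m : ℕ) : ℝ) ≤ (((d - 1) * n : ℕ) : ℝ) := by exact_mod_cast hmn
    push_cast [Nat.cast_sub (by omega : 1 ≤ d)] at this
    simpa [hD, hk] using this
  have hmpos : (0:ℝ) < (m:ℝ) := by
    have : (0:ℕ) < m := by omega
    exact_mod_cast this
  have hDk : D / k = 1 + 1 / k := by field_simp [hk]; linarith
  have key1 : (2:ℝ) ≤ (D / k) ^ d := by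
    rw [hDk]
    have hk0 : (0:ℝ) ≤ 1 / k := by positivity
    have hber := one_add_mul_le_pow (a := 1 / k) (by linarith : (-2:ℝ) ≤ 1 / k) d
    have : (1:ℝ) ≤ (d:ℝ) * (1 / k) := by
      rw [mul_one_div, le_div_iff₀ hkpos, one_mul]
      linarith
    linarith
  have key2 : (1:ℝ) ≤ D * Real.logb 2 (D / k) := by
    have h2 : Real.logb 2 2 ≤ Real.logb 2 ((D / k) ^ d) :=
      Real.logb_le_logb_of_le (by norm_num) (by norm_num) key1
    rw [Real.logb_self_eq_one (by norm_num), Real.logb_pow] at h2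
    simpa [hD] using h2
  have hlogpos : (0:ℝ) ≤ Real.logb 2 (D / k) := by
    apply Real.logb_nonneg (by norm_num)
    rw [le_div_iff₀ hkpos]; linarith
  have key3 : Real.logb 2 (m:ℝ) ≤ Real.logb 2 (n:ℝ) - Real.logb 2 (D / k) := by
    have hkn : (m:ℝ) ≤ k / D * n := by
      rw [div_mul_eq_mul_div, le_div_iff₀ hDpos]
      linarith
    have hnpos : (0:ℝ) < (n:ℝ) := by nlinarith
    have h3 : Real.logb 2 (m:ℝ) ≤ Real.logb 2 (k / D * n) :=
      Real.logb_le_logb_of_le (by norm_num) hmpos hkn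
    rw [Real.logb_mul (by positivity) (ne_of_gt hnpos)] at h3
    have hinv : k / D = (D / k)⁻¹ := by
      rw [inv_div]
    rw [hinv, Real.logb_inv] at h3
    linarith
  have hdl : (0:ℝ) ≤ D * ℓ := by positivity
  have hl0 : (0:ℝ) ≤ (ℓ:ℝ) := by linarith
  nlinarith [mul_le_mul_of_nonneg_left key3 hdl, mul_le_mul_of_nonneg_left key2 hl0]


lemma main_lemma (d : ℕ) (hd : 2 ≤ d)
    (𝒢 : ∀ V : Type, SimpleGraph V → Prop)
    (hhered : ∀ (V : Type) (G : SimpleGraph V) (S : Set V),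
      𝒢 V G → 𝒢 S (G.induce S))
    (hsep : ∀ (V : Type) [Fintype V] (G : SimpleGraph V), 𝒢 V G →
      ∃ X : Set V, X.ncard ≤ d ∧
        ∀ v : ↥(closedNbhdSet G X)ᶜ,
          2 * {w : ↥(closedNbhdSet G X)ᶜ |
                (G.induce (closedNbhdSet G X)ᶜ).Reachable v w}.ncard ≤ Fintype.card V)
    (ℓ : ℕ) (hℓ : 2 ≤ ℓ) :
    ∀ n : ℕ, ∀ (V : Type) [Fintype V] (G : SimpleGraph V), 𝒢 V G →
      _root_.Free (completeBipartiteGraph (Fin 2) (Fin ℓ)) G → Fintype.card V = n → 2 ≤ n →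
      ∃ v : V, ∀ I : Finset V, (∀ w ∈ I, G.Adj v w) → IndepSet G ↑I →
        (I.card : ℝ) ≤ (d:ℝ) * ℓ * Real.logb 2 n := by
  intro n
  induction n using Nat.strong_induction_on with
  | _ n IH =>
  intro V _inst G hG hK hcard hn2
  classical
  have hdl1 : (1:ℝ) ≤ (d:ℝ) * ℓ := by
    have h2 : (2:ℝ) ≤ (d:ℝ) := by exact_mod_cast hd
    have h2' : (2:ℝ) ≤ (ℓ:ℝ) := by exact_mod_cast hℓ
    nlinarith
  have hVne : Nonempty V := by
    rw [← Fintype.card_pos_iff]; omega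
  -- trivial case n = 2
  by_cases hn3 : n < 3
  · obtain ⟨v⟩ := hVne
    refine ⟨v, fun I hadj hind => ?_⟩
    have hI1 : I.card ≤ 1 := by
      rw [Finset.card_le_one]
      intro a ha b hb
      by_contra hab
      have hav : a ≠ v := fun h => G.irrefl (h ▸ hadj a ha)
      have hbv : b ≠ v := fun h => G.irrefl (h ▸ hadj b hb)
      have h3 : 2 < Fintype.card V := Fintype.two_lt_card_iff.2 ⟨a, b, v, hab, hav, hbv⟩
      omega
    refine triv_bound hn2 ?_
    calc (I.card : ℝ) ≤ 1 := by exact_mod_cast hI1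
      _ ≤ (d:ℝ) * ℓ := hdl1
  push_neg at hn3
  obtain ⟨X, hXd, hXsep⟩ := hsep V G hG
  set R : Set V := (closedNbhdSet G X)ᶜ with hRdef
  by_cases hRne : R.Nonempty
  · -- Case A: the separator leaves something uncovered
    obtain ⟨v₀, hv₀⟩ := hRne
    set v₀R : ↥R := ⟨v₀, hv₀⟩ with hv₀R
    set C : Set ↥R := {w : ↥R | (G.induce R).Reachable v₀R w} with hCdef
    have hCsep : 2 * C.ncard ≤ n := hcard ▸ hXsep v₀R
    have hv₀C : v₀R ∈ C := Reachable.refl _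
    have hCadj : ∀ (w : ↥R), w ∈ C → ∀ (u : ↥R), (G.induce R).Adj w u → u ∈ C :=
      fun w hw u hadj => Reachable.trans hw hadj.reachable
    by_cases hC2 : 2 ≤ C.ncard
    · -- recursive case in the component C
      haveI : Fintype ↥R := Fintype.ofFinite _
      haveI : Fintype ↥C := Fintype.ofFinite _
      have hCcard : Fintype.card ↥C = C.ncard := by
        rw [← Nat.card_coe_set_eq, Nat.card_eq_fintype_card]
      have hG₂ : 𝒢 ↥C ((G.induce R).induce C) := hhered _ _ C (hhered V G R hG)
      have hK₂ : _root_.Free (completeBipartiteGraph (Fin 2) (Fin ℓ)) ((G.induce R).induce C) :=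
        free_induce (free_induce hK R) C
      have hmlt : Fintype.card ↥C < n := by rw [hCcard]; omega
      have hm2 : 2 ≤ Fintype.card ↥C := by rw [hCcard]; omega
      obtain ⟨v, hv⟩ := IH (Fintype.card ↥C) hmlt ↥C ((G.induce R).induce C) hG₂ hK₂ rfl hm2
      refine ⟨↑↑v, fun I hadjI hindI => ?_⟩
      set I₁ := I.filter (fun w => w ∈ R) with hI₁
      set I₂ := I.filter (fun w => ¬ w ∈ R) with hI₂
      have hsplit : I₁.card + I₂.card = I.card :=
        Finset.card_filter_add_card_filter_not _
      have hvVR : (↑↑v : V) ∈ R := (↑v : ↥R).2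
      -- bound I₂
      have hI₂b : I₂.card ≤ d * (ℓ - 1) := by
        refine part_bound (v := (↑↑v : V)) hℓ hK (Set.toFinite X) hXd ?_ ?_ ?_ ?_
        · exact hvVR
        · exact fun w hw => hadjI w (Finset.mem_filter.1 hw).1
        · intro w hw
          have := (Finset.mem_filter.1 hw).2
          rwa [hRdef, Set.notMem_compl_iff] at this
        · exact indepSet_mono hindI (by exact_mod_cast Finset.filter_subset _ I)
      -- bound I₁
      have step0 : ∀ J : Finset ↥C,
          (∀ j ∈ J, ((G.induce R).induce C).Adj v j ∧ True) →
          IndepSet ((G.induce R).induce C) ↑J →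
          (J.card : ℝ) ≤ (d:ℝ) * ℓ * Real.logb 2 (Fintype.card ↥C) :=
        fun J h hi => hv J (fun j hj => (h j hj).1) hi
      have step1 := lift_bound (G := G.induce R) (S := C) (fun _ => True) v _ step0
      have step2 : ∀ J : Finset ↥R,
          (∀ j ∈ J, (G.induce R).Adj (↑v) j ∧
            (∃ h : (↑j : V) ∈ R, (⟨↑j, h⟩ : ↥R) ∈ C)) →
          IndepSet (G.induce R) ↑J →
          (J.card : ℝ) ≤ (d:ℝ) * ℓ * Real.logb 2 (Fintype.card ↥C) := by
        intro J hJ hiJ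
        refine step1 J (fun j hj => ⟨(hJ j hj).1, ?_, trivial⟩) hiJ
        obtain ⟨h, hC⟩ := (hJ j hj).2
        convert hC using 1
      have step3 := lift_bound (G := G) (S := R)
        (fun w => ∃ h : w ∈ R, (⟨w, h⟩ : ↥R) ∈ C) v.1 _ step2
      have hI₁b : (I₁.card : ℝ) ≤ (d:ℝ) * ℓ * Real.logb 2 (Fintype.card ↥C) := by
        refine step3 I₁ (fun w hw => ?_)
          (indepSet_mono hindI (by exact_mod_cast Finset.filter_subset _ I))
        obtain ⟨hwI, hwR⟩ := Finset.mem_filter.1 hw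
        have hadjw : G.Adj (↑↑v : V) w := hadjI w hwI
        refine ⟨hadjw, hwR, hwR, ?_⟩
        exact hCadj _ v.2 ⟨w, hwR⟩ hadjw
      -- combine
      have hI₂b' : (I₂.card : ℝ) ≤ (d:ℝ) * ((ℓ:ℝ) - 1) := by
        have : ((d * (ℓ - 1) : ℕ) : ℝ) = (d:ℝ) * ((ℓ:ℝ) - 1) := by
          push_cast [Nat.cast_sub (by omega : 1 ≤ ℓ)]
          ring
        rw [← this]
        exact_mod_cast hI₂b
      have := caseA_ineq (c := Fintype.card ↥C) (n := n) hd hℓ hm2 (by omega)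
      calc (I.card : ℝ) = (I₁.card : ℝ) + (I₂.card : ℝ) := by
            rw [← hsplit]; push_cast; ring
        _ ≤ (d:ℝ) * ℓ * Real.logb 2 (Fintype.card ↥C) + (d:ℝ) * ((ℓ:ℝ) - 1) := by
            linarith
        _ ≤ (d:ℝ) * ℓ * Real.logb 2 n := this
    · -- C is a singleton
      refine ⟨v₀, fun I hadjI hindI => ?_⟩
      have hmemX : ∀ w ∈ I, w ∈ closedNbhdSet G X := by
        intro w hw
        by_contra hwX
        have hwR : w ∈ R := by rwa [hRdef, Set.mem_compl_iff]
        have hwC : (⟨w, hwR⟩ : ↥R) ∈ C := hCadj _ hv₀C _ (hadjI w hw)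
        have hne : v₀R ≠ (⟨w, hwR⟩ : ↥R) := by
          intro h
          have hval : v₀ = w := congrArg Subtype.val h
          exact G.irrefl (hval ▸ hadjI w hw)
        have hpair : ({v₀R, (⟨w, hwR⟩ : ↥R)} : Set ↥R) ⊆ C := by
          intro z hz
          rcases Set.mem_insert_iff.1 hz with hz | hz
          · exact hz ▸ hv₀C
          · rw [Set.mem_singleton_iff] at hz
            exact hz ▸ hwC
        have := Set.ncard_le_ncard hpair (Set.toFinite C)
        rw [Set.ncard_pair hne] at this
        omega
      have hIb : I.card ≤ d * (ℓ - 1) :=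
        part_bound hℓ hK (Set.toFinite X) hXd hv₀ hadjI hmemX hindI
      refine triv_bound hn2 ?_
      calc (I.card : ℝ) ≤ ((d * (ℓ - 1) : ℕ) : ℝ) := by exact_mod_cast hIb
        _ ≤ (d:ℝ) * ℓ := by
            push_cast [Nat.cast_sub (by omega : 1 ≤ ℓ)]
            have h2 : (0:ℝ) ≤ (d:ℝ) := by positivity
            nlinarith
  · -- Case B: X dominates everything
    have hcover : closedNbhdSet G X = Set.univ := by
      rw [← Set.compl_empty_iff]
      rwa [Set.not_nonempty_iff_eq_empty] at hRne
    obtain ⟨w₀⟩ := hVne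
    have hw₀ : w₀ ∈ closedNbhdSet G X := by rw [hcover]; trivial
    obtain ⟨x', hx'X, _⟩ := Set.mem_iUnion₂.1 hw₀
    set Xf := (Set.toFinite X).toFinset with hXf
    have hXfne : Xf.Nonempty := ⟨x', (Set.toFinite X).mem_toFinset.2 hx'X⟩
    obtain ⟨x₀, hx₀Xf, hx₀max⟩ := Finset.exists_max_image Xf
      (fun x => ((Set.toFinite (closedNbhd G x)).toFinset).card) hXfne
    set B : Set V := closedNbhd G x₀ with hBdef
    set Bn : ℕ := B.ncard with hBnd
    have hcov : (Finset.univ : Finset V) ⊆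
        Xf.biUnion (fun x => (Set.toFinite (closedNbhd G x)).toFinset) := by
      intro w _
      have hw : w ∈ closedNbhdSet G X := by rw [hcover]; trivial
      obtain ⟨x, hx, hwx⟩ := Set.mem_iUnion₂.1 hw
      exact Finset.mem_biUnion.2
        ⟨x, (Set.toFinite X).mem_toFinset.2 hx, (Set.toFinite _).mem_toFinset.2 hwx⟩
    have hnd : n ≤ d * Bn := by
      have h1 : n ≤ ∑ x ∈ Xf, ((Set.toFinite (closedNbhd G x)).toFinset).card := by
        calc n = (Finset.univ : Finset V).card := by rw [Finset.card_univ, hcard]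
          _ ≤ _ := le_trans (Finset.card_le_card hcov) Finset.card_biUnion_le
      have h2 : ∑ x ∈ Xf, ((Set.toFinite (closedNbhd G x)).toFinset).card ≤
          Xf.card • ((Set.toFinite (closedNbhd G x₀)).toFinset).card :=
        Finset.sum_le_card_nsmul _ _ _ (fun x hx => hx₀max x hx)
      have h3 : ((Set.toFinite (closedNbhd G x₀)).toFinset).card = Bn :=
        (Set.ncard_eq_toFinset_card _ _).symm
      have h4 : Xf.card ≤ d := by
        rw [hXf, ← Set.ncard_eq_toFinset_card X (Set.toFinite X)]
        exact hXd
      calc n ≤ Xf.card • ((Set.toFinite (closedNbhd G x₀)).toFinset).card := le_trans h1 h2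
        _ = Xf.card * Bn := by rw [smul_eq_mul, h3]
        _ ≤ d * Bn := Nat.mul_le_mul_right _ h4
    have hx₀B : x₀ ∈ B := Set.mem_insert _ _
    have hBpos : 1 ≤ Bn := (Set.ncard_pos (Set.toFinite B)).2 ⟨x₀, hx₀B⟩
    set W : Set V := Bᶜ with hWdef
    have hsum : Bn + W.ncard = n := by
      rw [hBnd, hWdef]
      rw [Set.ncard_add_ncard_compl B (Set.toFinite B) (Set.toFinite _),
        Nat.card_eq_fintype_card, hcard]
    have hWfact : ∀ u, u ∈ W → u ≠ x₀ ∧ ¬ G.Adj u x₀ := by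
      intro u hu
      refine ⟨fun h => hu (h ▸ hx₀B), fun h => ?_⟩
      exact hu (Set.mem_insert_iff.2 (Or.inr (G.adj_symm h)))
    rcases Nat.lt_or_ge W.ncard 2 with hW2 | hW2
    · rcases Nat.lt_or_ge W.ncard 1 with hW0 | hW1
      · -- W empty : x₀ dominates
        have hWe : W = ∅ := by
          rw [← Set.ncard_eq_zero (Set.toFinite W)]; omega
        have hBu : B = Set.univ := by
          rw [← Set.compl_empty_iff, ← hWdef, hWe]
        have hdom : ∀ w : V, w ≠ x₀ → G.Adj x₀ w := by
          intro w hw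
          have : w ∈ B := by rw [hBu]; trivial
          rcases Set.mem_insert_iff.1 this with h | h
          · exact absurd h hw
          · exact h
        set S : Set V := ({x₀} : Set V)ᶜ with hSdef
        haveI : Fintype ↥S := Fintype.ofFinite _
        have hScard : Fintype.card ↥S = n - 1 := by
          have h5 : Fintype.card ↥S = S.ncard := by
            rw [← Nat.card_coe_set_eq, Nat.card_eq_fintype_card]
          have h6 := Set.ncard_add_ncard_compl ({x₀} : Set V) (Set.toFinite _) (Set.toFinite _)
          rw [Set.ncard_singleton, Nat.card_eq_fintype_card, hcard, ← hSdef] at h6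
          omega
        obtain ⟨v, hv⟩ := IH (Fintype.card ↥S) (by rw [hScard]; omega) ↥S (G.induce S)
          (hhered V G S hG) (free_induce hK S) rfl (by rw [hScard]; omega)
        refine ⟨↑v, fun I hadjI hindI => ?_⟩
        by_cases hx₀I : x₀ ∈ I
        · have hI1 : I.card ≤ 1 := by
            rw [Finset.card_le_one]
            have hall : ∀ a ∈ I, a = x₀ := by
              intro a ha
              by_contra hax
              exact hindI hx₀I ha (Ne.symm hax) (hdom a hax)
            intro a ha b hb
            rw [hall a ha, hall b hb]
          refine triv_bound hn2 ?_
          calc (I.card : ℝ) ≤ 1 := by exact_mod_cast hI1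
            _ ≤ (d:ℝ) * ℓ := hdl1
        · have step := lift_bound (G := G) (S := S) (fun _ => True) v _
            (fun J h hi => hv J (fun j hj => (h j hj).1) hi)
          have hpre : ∀ w ∈ I, G.Adj (↑v : V) w ∧ w ∈ S ∧ True := by
            intro w hw
            refine ⟨hadjI w hw, ?_, trivial⟩
            simp only [hSdef, Set.mem_compl_iff, Set.mem_singleton_iff]
            intro h
            exact hx₀I (h ▸ hw)
          have hb := step I hpre hindI
          refine le_trans hb ?_
          have hmono : Real.logb 2 (Fintype.card ↥S : ℝ) ≤ Real.logb 2 (n : ℝ) := by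
            apply Real.logb_le_logb_of_le (by norm_num)
            · rw [hScard]
              have : (0:ℕ) < n - 1 := by omega
              exact_mod_cast this
            · have : Fintype.card ↥S ≤ n := by omega
              exact_mod_cast this
          have h0 : (0:ℝ) ≤ (d:ℝ) * ℓ := by positivity
          nlinarith [hmono]
      · -- W is a singleton {u}
        have hW1' : W.ncard = 1 := by omega
        obtain ⟨u, hu⟩ := Set.ncard_eq_one.1 hW1'
        have huW : u ∈ W := by rw [hu]; exact Set.mem_singleton _
        obtain ⟨hune, hunadj⟩ := hWfact u huW
        refine ⟨u, fun I hadjI hindI => ?_⟩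
        have hb : I.card ≤ ℓ - 1 := by
          refine common_nbrs_card_le hℓ hK hune hunadj (fun w hw => ?_) hindI
          refine ⟨hadjI w hw, ?_⟩
          have hwB : w ∈ B := by
            by_contra hwB
            have hwW : w ∈ W := hwB
            rw [hu, Set.mem_singleton_iff] at hwW
            exact G.irrefl (hwW ▸ hadjI w hw)
          rcases Set.mem_insert_iff.1 hwB with h | h
          · exact absurd (h ▸ hadjI w hw) hunadj
          · exact h
        refine triv_bound hn2 ?_
        have hl1 : (1:ℝ) ≤ (ℓ:ℝ) := by
          have : (1:ℕ) ≤ ℓ := by omega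
          exact_mod_cast this
        have hd0 : (2:ℝ) ≤ (d:ℝ) := by exact_mod_cast hd
        calc (I.card : ℝ) ≤ ((ℓ - 1 : ℕ) : ℝ) := by exact_mod_cast hb
          _ = (ℓ:ℝ) - 1 := by rw [Nat.cast_sub (by omega : 1 ≤ ℓ)]; norm_num
          _ ≤ (d:ℝ) * ℓ := by nlinarith
    · -- main recursive case into W
      haveI : Fintype ↥W := Fintype.ofFinite _
      have hWcard : Fintype.card ↥W = W.ncard := by
        rw [← Nat.card_coe_set_eq, Nat.card_eq_fintype_card]
      have hm2 : 2 ≤ Fintype.card ↥W := by rw [hWcard]; omega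
      have hmlt : Fintype.card ↥W < n := by rw [hWcard]; omega
      obtain ⟨v, hv⟩ := IH (Fintype.card ↥W) hmlt ↥W (G.induce W)
        (hhered V G W hG) (free_induce hK W) rfl hm2
      obtain ⟨hvne, hvnadj⟩ := hWfact ↑v v.2
      refine ⟨↑v, fun I hadjI hindI => ?_⟩
      set I₁ := I.filter (fun w => w ∈ W) with hI₁
      set I₂ := I.filter (fun w => ¬ w ∈ W) with hI₂
      have hsplit : I₁.card + I₂.card = I.card :=
        Finset.card_filter_add_card_filter_not _
      have hI₂b : I₂.card ≤ ℓ - 1 := by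
        refine common_nbrs_card_le hℓ hK hvne hvnadj (fun w hw => ?_)
          (indepSet_mono hindI (by exact_mod_cast Finset.filter_subset _ I))
        obtain ⟨hwI, hwW⟩ := Finset.mem_filter.1 hw
        refine ⟨hadjI w hwI, ?_⟩
        have hwB : w ∈ B := by
          by_contra hwB
          exact hwW hwB
        rcases Set.mem_insert_iff.1 hwB with h | h
        · exact absurd (h ▸ hadjI w hwI) hvnadj
        · exact h
      have step := lift_bound (G := G) (S := W) (fun _ => True) v _
        (fun J h hi => hv J (fun j hj => (h j hj).1) hi)
      have hI₁b : (I₁.card : ℝ) ≤ (d:ℝ) * ℓ * Real.logb 2 (Fintype.card ↥W) := by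
        refine step I₁ (fun w hw => ?_)
          (indepSet_mono hindI (by exact_mod_cast Finset.filter_subset _ I))
        obtain ⟨hwI, hwW⟩ := Finset.mem_filter.1 hw
        exact ⟨hadjI w hwI, hwW, trivial⟩
      have hdm : d * Fintype.card ↥W ≤ (d - 1) * n := by
        have e0 : Fintype.card ↥W + Bn = n := by rw [hWcard]; omega
        have e1 : d * n = d * Fintype.card ↥W + d * Bn := by
          rw [← Nat.mul_add, e0]
        calc d * Fintype.card ↥W ≤ d * n - n := by
              refine Nat.le_sub_of_add_le ?_
              rw [e1]
              exact Nat.add_le_add_left hnd _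
          _ = (d - 1) * n := by rw [Nat.sub_one_mul]
      have hfin := caseB_ineq hd hℓ hm2 hdm
      have hl1R : ((ℓ - 1 : ℕ) : ℝ) = (ℓ:ℝ) - 1 := by
        rw [Nat.cast_sub (by omega : 1 ≤ ℓ)]; norm_num
      calc (I.card : ℝ) = (I₁.card : ℝ) + (I₂.card : ℝ) := by
            rw [← hsplit]; push_cast; ring
        _ ≤ (d:ℝ) * ℓ * Real.logb 2 (Fintype.card ↥W) + ((ℓ:ℝ) - 1) := by
            have h7 : (I₂.card : ℝ) ≤ (ℓ:ℝ) - 1 := by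
              rw [← hl1R]; exact_mod_cast hI₂b
            linarith
        _ ≤ (d:ℝ) * ℓ * Real.logb 2 n := hfin

theorem stmt_5' (d : ℕ) (hd : 2 ≤ d)
    (𝒢 : ∀ V : Type, SimpleGraph V → Prop)
    (hhered : ∀ (V : Type) (G : SimpleGraph V) (S : Set V),
      𝒢 V G → 𝒢 S (G.induce S))
    (hsep : ∀ (V : Type) [Fintype V] (G : SimpleGraph V), 𝒢 V G →
      ∃ X : Set V, X.ncard ≤ d ∧
        ∀ v : ↥(closedNbhdSet G X)ᶜ,
          2 * {w : ↥(closedNbhdSet G X)ᶜ |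
                (G.induce (closedNbhdSet G X)ᶜ).Reachable v w}.ncard ≤ Fintype.card V)
    (ℓ : ℕ) (hℓ : 2 ≤ ℓ)
    (V : Type) [Fintype V] (G : SimpleGraph V) (hG : 𝒢 V G)
    (hK : _root_.Free (completeBipartiteGraph (Fin 2) (Fin ℓ)) G)
    (hn : 2 ≤ Fintype.card V) :
    ∃ v : V, (indepNumOn G (closedNbhd G v) : ℝ) ≤
      d * ℓ * Real.logb 2 (Fintype.card V) := by
  classical
  obtain ⟨v, hv⟩ := main_lemma d hd 𝒢 hhered hsep ℓ hℓ (Fintype.card V) V G hG hK rfl hn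
  refine ⟨v, ?_⟩
  have hdl1 : (1:ℝ) ≤ (d:ℝ) * ℓ := by
    have h2 : (2:ℝ) ≤ (d:ℝ) := by exact_mod_cast hd
    have h2' : (2:ℝ) ≤ (ℓ:ℝ) := by exact_mod_cast hℓ
    nlinarith
  set A := {n | ∃ s : Finset V, ↑s ⊆ closedNbhd G v ∧ IndepSet G ↑s ∧ s.card = n} with hA
  have hne : A.Nonempty := ⟨0, ∅, by simp, by simp [IndepSet], rfl⟩
  have hbdd : BddAbove A := by
    refine ⟨Fintype.card V, fun m hm => ?_⟩
    obtain ⟨s, _, _, hc⟩ := hm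
    rw [← hc, ← Finset.card_univ]
    exact Finset.card_le_univ s
  obtain ⟨s, hsub, hindep, hcards⟩ := Nat.sSup_mem hne hbdd
  have hgoal : ((sSup A : ℕ) : ℝ) ≤ (d:ℝ) * ℓ * Real.logb 2 (Fintype.card V) := by
    rw [← hcards]
    by_cases hvs : v ∈ s
    · have hall : ∀ w ∈ s, w = v := by
        intro w hw
        by_contra hwv
        have hwN : w ∈ closedNbhd G v := hsub hw
        rcases Set.mem_insert_iff.1 hwN with h | h
        · exact hwv h
        · exact hindep hvs hw (fun h' => hwv h'.symm) h
      have hc1 : s.card ≤ 1 := by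
        rw [Finset.card_le_one]
        intro a ha b hb
        rw [hall a ha, hall b hb]
      refine triv_bound hn ?_
      calc (s.card : ℝ) ≤ 1 := by exact_mod_cast hc1
        _ ≤ (d:ℝ) * ℓ := hdl1
    · refine hv s (fun w hw => ?_) hindep
      have hwN : w ∈ closedNbhd G v := hsub hw
      rcases Set.mem_insert_iff.1 hwN with h | h
      · exact absurd (h ▸ hw) hvs
      · exact h
  exact hgoal

/-- Let `d ≥ 2` and let `𝒢` be a hereditary graph class with `d`-dominated
balanced separators. Then for every `ℓ ≥ 2`, every `K_{2,ℓ}`-free graph `G ∈ 𝒢` with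
`n ≥ 2` vertices has a vertex `v` with `α(G[N_G[v]]) ≤ dℓ·log₂ n`. -/
theorem stmt_5 (d : ℕ) (hd : 2 ≤ d)
    (𝒢 : ∀ V : Type, SimpleGraph V → Prop)
    (hhered : ∀ (V : Type) (G : SimpleGraph V) (S : Set V),
      𝒢 V G → 𝒢 S (G.induce S))
    (hsep : ∀ (V : Type) [Fintype V] (G : SimpleGraph V), 𝒢 V G →
      ∃ X : Set V, X.ncard ≤ d ∧
        ∀ v : ↥(closedNbhdSet G X)ᶜ,
          2 * {w : ↥(closedNbhdSet G X)ᶜ |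
                (G.induce (closedNbhdSet G X)ᶜ).Reachable v w}.ncard ≤ Fintype.card V)
    (ℓ : ℕ) (hℓ : 2 ≤ ℓ)
    (V : Type) [Fintype V] (G : SimpleGraph V) (hG : 𝒢 V G)
    (hK : _root_.Free (completeBipartiteGraph (Fin 2) (Fin ℓ)) G)
    (hn : 2 ≤ Fintype.card V) :
    ∃ v : V, (indepNumOn G (closedNbhd G v) : ℝ) ≤
      d * ℓ * Real.logb 2 (Fintype.card V) := by
  exact stmt_5' d hd 𝒢 hhered hsep ℓ hℓ V G hG hK hn
end

section
/- For every graph G, the α-degeneracy of G is at most its tree-independence number. Equivalently: if k is the tree-independence number of G, then every non-null induced subgraph H of G contains a vertex v with α(H[N_H[v]]) ≤ k. -/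
open SimpleGraph

section Aux

variable {ι : Type*} [DecidableEq ι] {T : SimpleGraph ι}

/-- Appending two paths meeting only at the junction yields a path. -/
lemma auxAppendIsPath {a b c : ι} {p : T.Walk a b} {q : T.Walk b c}
    (hp : p.IsPath) (hq : q.IsPath)
    (h : ∀ y ∈ p.support, y ∈ q.support → y = b) : (p.append q).IsPath := by
  rw [SimpleGraph.Walk.isPath_def, SimpleGraph.Walk.support_append]
  have hqc : q.support = b :: q.support.tail := q.support_eq_cons
  have hqn : q.support.Nodup := hq.support_nodup
  rw [hqc] at hqn
  rw [List.nodup_cons] at hqn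
  refine List.Nodup.append hp.support_nodup hqn.2 ?_
  intro y hyp hyt
  have hyq : y ∈ q.support := by rw [hqc]; exact List.mem_cons_of_mem _ hyt
  have := h y hyp hyq
  subst this
  exact hqn.1 hyt

/-- In a tree, paths between two vertices are unique. -/
lemma treePathEq (hT : T.IsTree) {a b : ι} {p q : T.Walk a b}
    (hp : p.IsPath) (hq : q.IsPath) : p = q :=
  (hT.existsUnique_path a b).unique hp hq

/-- In a tree, a path realizes the distance. -/
lemma treePathLength (hT : T.IsTree) {a b : ι} {p : T.Walk a b} (hp : p.IsPath) :
    p.length = T.dist a b := by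
  obtain ⟨w, hw⟩ := (hT.isConnected.preconnected a b).exists_walk_length_eq_dist
  have hpe : p = w.bypass := treePathEq hT hp w.bypass_isPath
  refine le_antisymm ?_ (SimpleGraph.dist_le p)
  calc p.length = w.bypass.length := by rw [hpe]
    _ ≤ w.length := w.length_bypass_le
    _ = T.dist a b := hw

/-- Between two vertices of a connected induced set there is a path within the set. -/
lemma connectedSetPath {C : Set ι} (hC : (T.induce C).Connected) {a b : ι}
    (ha : a ∈ C) (hb : b ∈ C) :
    ∃ p : T.Walk a b, p.IsPath ∧ ∀ y ∈ p.support, y ∈ C := by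
  obtain ⟨w⟩ := hC.preconnected ⟨a, ha⟩ ⟨b, hb⟩
  let f : T.induce C ↪g T := SimpleGraph.Embedding.induce C
  have hw : (w.map f.toHom).support = w.support.map f := SimpleGraph.Walk.support_map _ _
  refine ⟨(w.map f.toHom).bypass, SimpleGraph.Walk.bypass_isPath _, ?_⟩
  intro y hy
  have hy2 : y ∈ (w.map f.toHom).support := SimpleGraph.Walk.support_bypass_subset _ hy
  rw [hw] at hy2
  obtain ⟨z, _, rfl⟩ := List.mem_map.1 hy2
  exact z.2

/-- Decompose a walk at the first vertex belonging to a set `C` (the endpoint is in `C`). -/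
lemma existsFirstMem {C : Set ι} :
    ∀ {a b : ι} (w : T.Walk a b), b ∈ C →
    ∃ (x : ι) (_ : x ∈ C) (p : T.Walk a x) (q : T.Walk x b),
      w = p.append q ∧ ∀ y ∈ p.support, y ∈ C → y = x := by
  intro a b w
  induction w with
  | nil =>
    exact fun hb => ⟨_, hb, SimpleGraph.Walk.nil, SimpleGraph.Walk.nil, rfl,
      by intro y hy _; simpa using hy⟩
  | @cons u v b' h w' ih =>
    intro hb
    by_cases hu : u ∈ C
    · exact ⟨u, hu, SimpleGraph.Walk.nil, SimpleGraph.Walk.cons h w', rfl,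
        by intro y hy _; simpa using hy⟩
    · obtain ⟨x, hx, p, q, hw, hfirst⟩ := ih hb
      refine ⟨x, hx, SimpleGraph.Walk.cons h p, q, ?_, ?_⟩
      · rw [SimpleGraph.Walk.cons_append, hw]
      · intro y hy hyC
        rw [SimpleGraph.Walk.support_cons, List.mem_cons] at hy
        rcases hy with rfl | hy
        · exact absurd hyC hu
        · exact hfirst y hy hyC

/-- Gate lemma: the vertex of a connected set `C` nearest to `r` lies on every
path from `r` to a vertex of `C`. -/
lemma gateMemSupport (hT : T.IsTree) {C : Set ι} (hC : (T.induce C).Connected)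
    {r m s : ι} (hm : m ∈ C) (hmin : ∀ t ∈ C, T.dist r m ≤ T.dist r t)
    (hs : s ∈ C) {P : T.Walk r s} (hP : P.IsPath) : m ∈ P.support := by
  obtain ⟨x, hx, p, q, hw, hfirst⟩ := existsFirstMem P hs
  obtain ⟨A, hA, hAsupp⟩ := connectedSetPath hC hx hm
  have hppath : p.IsPath := by rw [hw] at hP; exact hP.of_append_left
  have hW : (p.append A).IsPath :=
    auxAppendIsPath hppath hA (fun y hyp hyA => hfirst y hyp (hAsupp y hyA))
  have hlen : p.length + A.length = T.dist r m := by
    rw [← SimpleGraph.Walk.length_append]; exact treePathLength hT hW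
  have hxlen : p.length = T.dist r x := treePathLength hT hppath
  have hle := hmin x hx
  have hA0 : A.length = 0 := by omega
  have hxm : x = m := SimpleGraph.Walk.eq_of_length_eq_zero hA0
  subst hxm
  rw [hw]
  exact SimpleGraph.Walk.subset_support_append_left _ _ (SimpleGraph.Walk.end_mem_support p)

end Aux

/-- Monotonicity of the independence number under inclusion into a set of the
ambient graph. -/
lemma indepNumOn_induce_le {V : Type} [Fintype V] (G : SimpleGraph V) (S : Set V)
    (A : Set ↥S) (B : Set V) (h : ∀ x : ↥S, x ∈ A → (x : V) ∈ B) :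
    indepNumOn (G.induce S) A ≤ indepNumOn G B := by
  classical
  apply csSup_le
  · exact ⟨0, ∅, by simp, by simp [IndepSet], by simp⟩
  · rintro n ⟨s, hsA, hsI, rfl⟩
    apply le_csSup
    · refine ⟨Fintype.card V, ?_⟩
      rintro n ⟨t, -, -, rfl⟩
      exact t.card_le_univ
    · refine ⟨s.image Subtype.val, ?_, ?_, ?_⟩
      · intro x hx
        simp only [Finset.coe_image, Set.mem_image, Finset.mem_coe] at hx
        obtain ⟨y, hy, rfl⟩ := hx
        exact h y (hsA hy)
      · intro x hx y hy hxy hadj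
        simp only [Finset.coe_image, Set.mem_image, Finset.mem_coe] at hx hy
        obtain ⟨x', hx', rfl⟩ := hx
        obtain ⟨y', hy', rfl⟩ := hy
        have hne : x' ≠ y' := fun hc => hxy (by rw [hc])
        exact hsI hx' hy' hne hadj
      · exact Finset.card_image_of_injective _ Subtype.val_injective

/-- For every graph `G`, the `α`-degeneracy of `G` is at most its
tree-independence number: for every tree-decomposition of `G` with independence number
at most `k`, every non-null induced subgraph `H = G[S]` of `G` contains a vertex `v`
with `α(H[N_H[v]]) ≤ k`. -/
theorem stmt_7 {V : Type} [Fintype V] (G : SimpleGraph V)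
    {ι : Type} [Fintype ι] (td : TreeDecomp G ι) (k : ℕ)
    (hk : ∀ t : ι, indepNumOn G (td.bag t) ≤ k)
    (S : Set V) (hS : S.Nonempty) :
    ∃ v : ↥S, indepNumOn (G.induce S) (closedNbhd (G.induce S) v) ≤ k := by
  classical
  obtain ⟨r⟩ : Nonempty ι := td.isTree.isConnected.nonempty
  -- every vertex is in some bag
  have hTne : ∀ v : V, ∃ t, v ∈ td.bag t := by
    intro v
    obtain ⟨⟨t, ht⟩⟩ := (td.subtree v).nonempty
    exact ⟨t, ht⟩
  -- for each vertex choose the bag-node nearest to `r`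
  have hsel : ∀ v : V, ∃ t, v ∈ td.bag t ∧
      ∀ t', v ∈ td.bag t' → td.tree.dist r t ≤ td.tree.dist r t' := by
    intro v
    obtain ⟨t0, ht0⟩ := hTne v
    obtain ⟨t, ht, hmin⟩ := Finset.exists_min_image
      (Finset.univ.filter fun t => v ∈ td.bag t) (td.tree.dist r)
      ⟨t0, by simp [ht0]⟩
    exact ⟨t, by simpa using ht, fun t' ht' => hmin t' (by simp [ht'])⟩
  choose tm htm hmin using hsel
  -- pick `v₀ ∈ S` whose nearest bag-node is farthest from `r`
  obtain ⟨v0, hv0S', hmax⟩ := Finset.exists_max_image S.toFinset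
    (fun v => td.tree.dist r (tm v)) (Set.toFinset_nonempty.mpr hS)
  rw [Set.mem_toFinset] at hv0S'
  -- every `G`-neighbor of `v₀` within `S` lies in the bag of `tm v₀`
  have hnb : ∀ u, u ∈ S → G.Adj v0 u → u ∈ td.bag (tm v0) := by
    intro u huS hadj
    obtain ⟨s, hv0s, hus⟩ := td.covers hadj
    obtain ⟨P0⟩ := td.isTree.isConnected.preconnected r s
    set P := P0.bypass with hPdef
    have hP : P.IsPath := P0.bypass_isPath
    have hgv : tm v0 ∈ P.support :=
      gateMemSupport td.isTree (td.subtree v0) (htm v0) (hmin v0) hv0s hP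
    have hgu : tm u ∈ P.support :=
      gateMemSupport td.isTree (td.subtree u) (htm u) (hmin u) hus hP
    have hd : td.tree.dist r (tm u) ≤ td.tree.dist r (tm v0) :=
      hmax u (Set.mem_toFinset.mpr huS)
    have hspec := P.take_spec hgu
    have hcases : tm v0 ∈ (P.takeUntil (tm u) hgu).support ∨
        tm v0 ∈ (P.dropUntil (tm u) hgu).support := by
      rw [← SimpleGraph.Walk.mem_support_append_iff, hspec]; exact hgv
    have hdrop : ∀ y ∈ (P.dropUntil (tm u) hgu).support, u ∈ td.bag y := by
      obtain ⟨A, hA, hAs⟩ := connectedSetPath (td.subtree u) (htm u) hus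
      have hEq : P.dropUntil (tm u) hgu = A :=
        treePathEq td.isTree (hP.dropUntil hgu) hA
      rw [hEq]; exact fun y hy => hAs y hy
    rcases hcases with hcase | hcase
    · have htake : (P.takeUntil (tm u) hgu).IsPath := hP.takeUntil hgu
      set Q := P.takeUntil (tm u) hgu with hQdef
      have hQlen : Q.length = td.tree.dist r (tm u) := treePathLength td.isTree htake
      have h2 := Q.take_spec hcase
      have hQl2 : (Q.takeUntil (tm v0) hcase).length = td.tree.dist r (tm v0) :=
        treePathLength td.isTree (htake.takeUntil hcase)
      have hle : (Q.takeUntil (tm v0) hcase).length +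
          (Q.dropUntil (tm v0) hcase).length = Q.length := by
        rw [← SimpleGraph.Walk.length_append, h2]
      have h0 : (Q.dropUntil (tm v0) hcase).length = 0 := by omega
      have heq : tm v0 = tm u := SimpleGraph.Walk.eq_of_length_eq_zero h0
      rw [heq]; exact htm u
    · exact hdrop _ hcase
  -- conclude
  refine ⟨⟨v0, hv0S'⟩, ?_⟩
  refine le_trans (indepNumOn_induce_le G S _ (td.bag (tm v0)) ?_) (hk (tm v0))
  intro x hx
  rcases hx with hx | hx
  · rw [hx]; exact htm v0
  · exact hnb x x.2 hx
end

section
/- Let p and ℓ be positive integers and let H be a bipartite K_{ℓ,ℓ}-free graph with bipartition A, B, where |B| ≥ p·ℓ. Then at most ℓ−1 vertices from A have fewer than p non-neighbors in B. -/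
open SimpleGraph

/-- Let `p, ℓ` be positive integers and let `H` be a bipartite `K_{ℓ,ℓ}`-free
graph with bipartition `A, B` where `|B| ≥ p·ℓ`. Then at most `ℓ − 1` vertices from `A`
have fewer than `p` non-neighbors in `B`. -/
theorem stmt_8 (p ℓ : ℕ) (hp : 0 < p) (hℓ : 0 < ℓ)
    {V : Type} [Fintype V] [DecidableEq V] (H : SimpleGraph V) [DecidableRel H.Adj]
    (A B : Finset V) (hdisj : Disjoint A B) (hunion : A ∪ B = Finset.univ)
    (hA : IndepSet H ↑A) (hB : IndepSet H ↑B)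
    (hK : _root_.Free (completeBipartiteGraph (Fin ℓ) (Fin ℓ)) H)
    (hBcard : p * ℓ ≤ B.card) :
    (A.filter fun a => (B.filter fun b => ¬ H.Adj a b).card < p).card ≤ ℓ - 1 := by
  by_contra hcon
  push_neg at hcon
  have hge : ℓ ≤ (A.filter fun a => (B.filter fun b => ¬ H.Adj a b).card < p).card := by
    omega
  obtain ⟨S, hS, hScard⟩ := Finset.exists_subset_card_eq hge
  have hSA : ∀ a ∈ S, a ∈ A := fun a ha => (Finset.mem_filter.1 (hS ha)).1
  have hSfew : ∀ a ∈ S, (B.filter fun b => ¬ H.Adj a b).card ≤ p - 1 := by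
    intro a ha
    have := (Finset.mem_filter.1 (hS ha)).2
    omega
  -- common neighborhood
  set C : Finset V := B.filter (fun b => ∀ a ∈ S, H.Adj a b) with hCdef
  have hsub : B \ C ⊆ S.biUnion (fun a => B.filter fun b => ¬ H.Adj a b) := by
    intro b hb
    rw [Finset.mem_sdiff, hCdef, Finset.mem_filter] at hb
    push_neg at hb
    obtain ⟨hbB, h2⟩ := hb
    obtain ⟨a, haS, hna⟩ := h2 hbB
    exact Finset.mem_biUnion.2 ⟨a, haS, Finset.mem_filter.2 ⟨hbB, hna⟩⟩
  have hsdcard : (B \ C).card ≤ ℓ * (p - 1) := by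
    calc (B \ C).card ≤ (S.biUnion (fun a => B.filter fun b => ¬ H.Adj a b)).card :=
          Finset.card_le_card hsub
      _ ≤ ∑ a ∈ S, (B.filter fun b => ¬ H.Adj a b).card := Finset.card_biUnion_le
      _ ≤ ∑ _a ∈ S, (p - 1) := Finset.sum_le_sum hSfew
      _ = ℓ * (p - 1) := by rw [Finset.sum_const, hScard, smul_eq_mul]
  have hCsubB : C ⊆ B := Finset.filter_subset _ _
  have hCcard : ℓ ≤ C.card := by
    have h1 : (B \ C).card = B.card - C.card := Finset.card_sdiff_of_subset hCsubB
    have h2 : C.card ≤ B.card := Finset.card_le_card hCsubB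
    have : ℓ * (p - 1) + ℓ ≤ p * ℓ := by
      cases p with
      | zero => omega
      | succ q => simp [Nat.succ_mul, Nat.mul_comm]
    omega
  obtain ⟨T, hT, hTcard⟩ := Finset.exists_subset_card_eq hCcard
  -- build embedding
  have eS := S.equivFinOfCardEq hScard
  have eT := T.equivFinOfCardEq hTcard
  let f : Fin ℓ → V := fun i => (eS.symm i : V)
  let g : Fin ℓ → V := fun i => (eT.symm i : V)
  have hfS : ∀ i, f i ∈ S := fun i => (eS.symm i).2
  have hgT : ∀ i, g i ∈ T := fun i => (eT.symm i).2
  have hfA : ∀ i, f i ∈ A := fun i => hSA _ (hfS i)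
  have hgB : ∀ i, g i ∈ B := fun i => hCsubB (hT (hgT i))
  have hadj : ∀ i j, H.Adj (f i) (g j) := by
    intro i j
    have := hT (hgT j)
    rw [hCdef, Finset.mem_filter] at this
    exact this.2 _ (hfS i)
  have hfinj : Function.Injective f := by
    intro i j h
    have : eS.symm i = eS.symm j := Subtype.ext h
    exact eS.symm.injective this
  have hginj : Function.Injective g := by
    intro i j h
    have : eT.symm i = eT.symm j := Subtype.ext h
    exact eT.symm.injective this
  refine hK.false ?_
  refine ⟨⟨Sum.elim f g, ?_⟩, ?_⟩
  · intro x y h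
    match x, y with
    | Sum.inl i, Sum.inl j => exact congrArg Sum.inl (hfinj h)
    | Sum.inr i, Sum.inr j => exact congrArg Sum.inr (hginj h)
    | Sum.inl i, Sum.inr j =>
      exfalso
      have h' : f i ∈ B := by rw [show f i = g j from h]; exact hgB j
      exact Finset.disjoint_left.1 hdisj (hfA i) h'
    | Sum.inr i, Sum.inl j =>
      exfalso
      have h' : g i ∈ A := by rw [show g i = f j from h]; exact hfA j
      exact Finset.disjoint_left.1 hdisj h' (hgB i)
  · intro x y
    match x, y with
    | Sum.inl i, Sum.inl j =>
      simp only [completeBipartiteGraph_adj, Sum.elim_inl]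
      constructor
      · intro h
        by_cases hij : i = j
        · subst hij; exact absurd h (H.irrefl)
        · exact absurd h (hA (hfA i) (hfA j) (fun e => hij (hfinj e)))
      · simp
    | Sum.inr i, Sum.inr j =>
      simp only [completeBipartiteGraph_adj, Sum.elim_inr]
      constructor
      · intro h
        by_cases hij : i = j
        · subst hij; exact absurd h (H.irrefl)
        · exact absurd h (hB (hgB i) (hgB j) (fun e => hij (hginj e)))
      · simp
    | Sum.inl i, Sum.inr j =>
      simp only [completeBipartiteGraph_adj, Sum.elim_inl, Sum.elim_inr]
      exact ⟨fun _ => Or.inl ⟨rfl, rfl⟩, fun _ => hadj i j⟩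
    | Sum.inr i, Sum.inl j =>
      simp only [completeBipartiteGraph_adj, Sum.elim_inl, Sum.elim_inr]
      exact ⟨fun _ => Or.inr ⟨rfl, rfl⟩, fun _ => (hadj j i).symm⟩
end

section
/- Let q and d be positive integers and let H be a bipartite graph with bipartition X, Y that contains a matching covering X, such that every vertex x ∈ X has degree at most q. If |X| > 2(d−1)q, then H contains an induced matching with d edges. -/
open SimpleGraph

/-- The graph `dK₂`: the disjoint union of `d` copies of `K₂`. -/
def dK2 (d : ℕ) : SimpleGraph (Fin d × Fin 2) :=
  SimpleGraph.fromRel fun a b => a.1 = b.1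

section Aux
variable {V : Type} [Fintype V] [DecidableEq V] (H : SimpleGraph V) [DecidableRel H.Adj]

lemma out_bound (X : Finset V) (q : ℕ) (m : V → V)
    (hm : ∀ x ∈ X, H.Adj x (m x)) (hminj : Set.InjOn m ↑X)
    (hdeg : ∀ x ∈ X, H.degree x ≤ q)
    (S : Finset V) (hS : S ⊆ X) (y : V) (hy : y ∈ X) :
    (S.filter fun x => x ≠ y ∧ H.Adj y (m x)).card ≤ q - 1 := by
  have h1 : (S.filter fun x => x ≠ y ∧ H.Adj y (m x)).card ≤
      ((H.neighborFinset y).erase (m y)).card := by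
    apply Finset.card_le_card_of_injOn m
    · intro x hx
      simp only [Finset.mem_coe, Finset.mem_filter] at hx
      simp only [Finset.mem_coe, Finset.mem_erase, SimpleGraph.mem_neighborFinset]
      exact ⟨fun h => hx.2.1 (hminj (hS hx.1) hy h), hx.2.2⟩
    · intro a ha b hb hab
      simp only [Finset.coe_filter, Set.mem_setOf_eq] at ha hb
      exact hminj (hS ha.1) (hS hb.1) hab
  rw [Finset.card_erase_of_mem (by rw [SimpleGraph.mem_neighborFinset]; exact hm y hy),
    SimpleGraph.card_neighborFinset_eq_degree] at h1
  have := hdeg y hy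
  omega

lemma pick_x (X : Finset V) (q : ℕ) (m : V → V)
    (hm : ∀ x ∈ X, H.Adj x (m x)) (hminj : Set.InjOn m ↑X)
    (hdeg : ∀ x ∈ X, H.degree x ≤ q)
    (S : Finset V) (hS : S ⊆ X) (hne : S.Nonempty) :
    ∃ x ∈ S, (S.filter fun x' => x' ≠ x ∧ H.Adj x' (m x)).card ≤ q - 1 := by
  apply Finset.exists_le_of_sum_le hne
  calc ∑ x ∈ S, (S.filter fun x' => x' ≠ x ∧ H.Adj x' (m x)).card
      = ∑ x ∈ S, ∑ x' ∈ S, (if x' ≠ x ∧ H.Adj x' (m x) then 1 else 0) := by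
        apply Finset.sum_congr rfl
        intro x _
        rw [Finset.card_filter]
    _ = ∑ x' ∈ S, ∑ x ∈ S, (if x' ≠ x ∧ H.Adj x' (m x) then 1 else 0) := Finset.sum_comm
    _ = ∑ x' ∈ S, (S.filter fun x => x ≠ x' ∧ H.Adj x' (m x)).card := by
        apply Finset.sum_congr rfl
        intro x' _
        rw [Finset.card_filter]
        apply Finset.sum_congr rfl
        intro x _
        congr 1
        rw [ne_comm]
    _ ≤ ∑ _x' ∈ S, (q - 1) := by
        apply Finset.sum_le_sum
        intro x' hx'
        exact out_bound H X q m hm hminj hdeg S hS x' (hS hx')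

lemma build (X : Finset V) (q : ℕ) (m : V → V)
    (hm : ∀ x ∈ X, H.Adj x (m x)) (hminj : Set.InjOn m ↑X)
    (hdeg : ∀ x ∈ X, H.degree x ≤ q) :
    ∀ d (S : Finset V), S ⊆ X → 2 * d * q + 1 ≤ S.card + 2 * q →
    ∃ T : Finset V, T ⊆ S ∧ T.card = d ∧
      ∀ a ∈ T, ∀ b ∈ T, a ≠ b → ¬ H.Adj a (m b) := by
  intro d
  induction d with
  | zero => intro S _ _; exact ⟨∅, by simp⟩
  | succ d ih =>
    intro S hS hcard
    have hmul : 2 * (d + 1) * q = 2 * d * q + 2 * q := by ring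
    have hScard : 2 * d * q + 1 ≤ S.card := by omega
    have hne : S.Nonempty := Finset.card_pos.mp (by omega)
    have hq : 1 ≤ q := by
      obtain ⟨x, hx⟩ := hne
      have h1 : 1 ≤ H.degree x := by
        rw [← SimpleGraph.card_neighborFinset_eq_degree]
        exact Finset.card_pos.mpr ⟨m x, by rw [SimpleGraph.mem_neighborFinset]; exact hm x (hS hx)⟩
      exact le_trans h1 (hdeg x (hS hx))
    obtain ⟨x, hxS, hin⟩ := pick_x H X q m hm hminj hdeg S hS hne
    set C : Finset V := S.filter (fun x' => x' ≠ x ∧ (H.Adj x (m x') ∨ H.Adj x' (m x))) with hC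
    have hCcard : C.card ≤ 2 * q - 2 := by
      have hsub : C ⊆ (S.filter fun x' => x' ≠ x ∧ H.Adj x (m x')) ∪
          (S.filter fun x' => x' ≠ x ∧ H.Adj x' (m x)) := by
        intro a ha
        simp only [hC, Finset.mem_filter, Finset.mem_union] at ha ⊢
        tauto
      have h1 := out_bound H X q m hm hminj hdeg S hS x (hS hxS)
      calc C.card ≤ _ := Finset.card_le_card hsub
        _ ≤ _ := Finset.card_union_le _ _
        _ ≤ 2 * q - 2 := by omega
    set S' : Finset V := S \ insert x C with hS'
    have hS'sub : S' ⊆ S := Finset.sdiff_subset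
    have hS'card : 2 * d * q + 1 ≤ S'.card + 2 * q := by
      have h1 : S.card ≤ S'.card + (insert x C).card := by
        have := Finset.card_sdiff_add_card_eq_card (Finset.inter_subset_left (s₂ := insert x C) (s₁ := S))
        calc S.card ≤ (S \ insert x C).card + (insert x C).card := Finset.card_le_card_sdiff_add_card
          _ = S'.card + (insert x C).card := rfl
      have h2 : (insert x C).card ≤ C.card + 1 := Finset.card_insert_le _ _
      omega
    obtain ⟨T', hT'sub, hT'card, hT'prop⟩ := ih S' (hS'sub.trans hS) hS'card
    have hxT' : x ∉ T' := by
      intro hxT'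
      have := hT'sub hxT'
      rw [hS', Finset.mem_sdiff] at this
      exact this.2 (Finset.mem_insert_self x C)
    refine ⟨insert x T', ?_, ?_, ?_⟩
    · exact Finset.insert_subset hxS (hT'sub.trans hS'sub)
    · rw [Finset.card_insert_of_notMem hxT', hT'card]
    · intro a ha b hb hab
      rw [Finset.mem_insert] at ha hb
      have hnotC : ∀ c ∈ T', c ≠ x ∧ ¬ (H.Adj x (m c) ∨ H.Adj c (m x)) := by
        intro c hc
        have hc' := hT'sub hc
        rw [hS', Finset.mem_sdiff, Finset.mem_insert] at hc'
        push_neg at hc'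
        have hcx : c ≠ x := hc'.2.1
        refine ⟨hcx, ?_⟩
        intro hadj
        exact hc'.2.2 (by simp only [hC, Finset.mem_filter]; exact ⟨hc'.1, hcx, hadj⟩)
      rcases ha with ha | ha <;> rcases hb with hb | hb
      · exact absurd (ha.trans hb.symm) hab
      · subst ha
        exact fun h => (hnotC b hb).2 (Or.inl h)
      · subst hb
        exact fun h => (hnotC a ha).2 (Or.inr h)
      · exact hT'prop a ha b hb hab

end Aux

/-- Let `q, d` be positive integers and let `H` be a bipartite graph with
bipartition `X, Y` containing a matching covering `X`, in which every `x ∈ X` has degree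
at most `q`. If `|X| > 2(d−1)q`, then `H` contains an induced matching with `d` edges. -/
theorem stmt_10 (q d : ℕ) (hq : 0 < q) (hd : 0 < d)
    {V : Type} [Fintype V] [DecidableEq V] (H : SimpleGraph V) [DecidableRel H.Adj]
    (X Y : Finset V) (hdisj : Disjoint X Y) (hunion : X ∪ Y = Finset.univ)
    (hX : IndepSet H ↑X) (hY : IndepSet H ↑Y)
    (m : V → V) (hm : ∀ x ∈ X, m x ∈ Y ∧ H.Adj x (m x)) (hminj : Set.InjOn m ↑X)
    (hdeg : ∀ x ∈ X, H.degree x ≤ q)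
    (hcard : 2 * (d - 1) * q < X.card) :
    Nonempty (dK2 d ↪g H) := by
  obtain ⟨d', rfl⟩ : ∃ d', d = d' + 1 := ⟨d - 1, by omega⟩
  have hcard' : 2 * (d' + 1) * q + 1 ≤ X.card + 2 * q := by
    have h1 : 2 * (d' + 1) * q = 2 * d' * q + 2 * q := by ring
    have h2 : 2 * ((d' + 1) - 1) * q = 2 * d' * q := by norm_num
    rw [h2] at hcard
    omega
  obtain ⟨T, hTsub, hTcard, hTprop⟩ :=
    build H X q m (fun x hx => (hm x hx).2) hminj hdeg (d' + 1) X le_rfl hcard'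
  set d := d' + 1
  -- enumeration of T
  let φ : Fin d → V := fun i => (T.equivFin.symm (Fin.cast hTcard.symm i) : V)
  have hφT : ∀ i, φ i ∈ T := fun i => (T.equivFin.symm (Fin.cast hTcard.symm i)).2
  have hφX : ∀ i, φ i ∈ X := fun i => hTsub (hφT i)
  have hφinj : Function.Injective φ := by
    intro i j h
    have := Subtype.ext h
    have := T.equivFin.symm.injective this
    exact Fin.cast_injective _ this
  have hmY : ∀ i, m (φ i) ∈ Y := fun i => (hm _ (hφX i)).1
  have hadj : ∀ i, H.Adj (φ i) (m (φ i)) := fun i => (hm _ (hφX i)).2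
  have hmφinj : ∀ i j, m (φ i) = m (φ j) → i = j := fun i j h =>
    hφinj (hminj (hφX i) (hφX j) h)
  have hnadj : ∀ i j, i ≠ j → ¬ H.Adj (φ i) (m (φ j)) := fun i j hij =>
    hTprop _ (hφT i) _ (hφT j) (fun h => hij (hφinj h))
  have hXX : ∀ i j, ¬ H.Adj (φ i) (φ j) := by
    intro i j
    by_cases hij : i = j
    · subst hij; exact H.irrefl
    · exact hX (hφX i) (hφX j) (fun h => hij (hφinj h))
  have hYY : ∀ i j, ¬ H.Adj (m (φ i)) (m (φ j)) := by
    intro i j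
    by_cases hij : i = j
    · subst hij; exact H.irrefl
    · exact hY (hmY i) (hmY j) (fun h => hij (hmφinj i j h))
  have hXnotY : ∀ i j, φ i ≠ m (φ j) := fun i j h =>
    (Finset.disjoint_left.mp hdisj (hφX i)) (h ▸ hmY j)
  have hfin2 : ∀ b : Fin 2, b ≠ 0 → b = 1 := by decide
  refine ⟨⟨⟨fun p => ![φ p.1, m (φ p.1)] p.2, ?_⟩, ?_⟩⟩
  · rintro ⟨i, bi⟩ ⟨j, bj⟩ h
    fin_cases bi <;> fin_cases bj <;>
      simp only [Matrix.cons_val_zero, Matrix.cons_val_one, Matrix.head_cons] at h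
    · exact Prod.ext (hφinj h) rfl
    · exact absurd h (hXnotY i j)
    · exact absurd h.symm (hXnotY j i)
    · exact Prod.ext (hmφinj i j h) rfl
  · rintro ⟨i, bi⟩ ⟨j, bj⟩
    have frel : ∀ (a b : Fin d × Fin 2), (dK2 d).Adj a b ↔ a ≠ b ∧ (a.1 = b.1 ∨ b.1 = a.1) :=
      fun a b => SimpleGraph.fromRel_adj _ a b
    fin_cases bi <;> fin_cases bj <;>
      simp only [Fin.mk_zero, Fin.mk_one, Function.Embedding.coeFn_mk, Matrix.cons_val_zero,
        Matrix.cons_val_one, Matrix.head_cons, frel, ne_eq, Prod.mk.injEq, Fin.zero_eq_one_iff,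
        Fin.one_eq_zero_iff, Nat.succ_ne_self, and_true, and_false, not_and, not_false_eq_true,
        Nat.reduceEqDiff, OfNat.ofNat_ne_one]
    · constructor
      · intro h; exact absurd h (hXX i j)
      · rintro ⟨hne, hij | hij⟩
        · exact absurd hij hne
        · exact absurd hij.symm hne
    · rw [true_and]
      constructor
      · intro h
        by_cases hij : i = j
        · exact Or.inl hij
        · exact absurd h (hnadj i j hij)
      · rintro (rfl | rfl) <;> exact hadj _
    · rw [true_and]
      constructor
      · intro h
        by_cases hij : i = j
        · exact Or.inl hij
        · exact absurd h.symm (hnadj j i (Ne.symm hij))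
      · rintro (rfl | rfl) <;> exact (hadj _).symm
    · constructor
      · intro h; exact absurd h (hYY i j)
      · rintro ⟨hne, hij | hij⟩
        · exact absurd hij hne
        · exact absurd hij.symm hne
end

section
/- Let G be a P₅-free graph, let r ∈ V(G), and let x, y be two distinct nonadjacent neighbors of r. Then for every connected component C of G' − M, the neighborhood N(C) of C is contained in U ∪ W_xy. -/
open SimpleGraph

/-- `N_r̄(v) = N(v) \\ N[r]`: the neighbors of `v` outside the closed neighborhood of `r`. -/
def Nbar {V : Type*} (G : SimpleGraph V) (r v : V) : Set V :=
  G.neighborSet v \ closedNbhd G r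

/-- `M = N(r) ∪ N_r̄(x) ∪ N_r̄(y)`. -/
def Mset {V : Type*} (G : SimpleGraph V) (r x y : V) : Set V :=
  G.neighborSet r ∪ Nbar G r x ∪ Nbar G r y

/-- `U`: the neighbors of `r` having a neighbor outside `M ∪ {r}`. -/
def Uset {V : Type*} (G : SimpleGraph V) (r x y : V) : Set V :=
  {u ∈ G.neighborSet r | (Nbar G r u \ (Nbar G r x ∪ Nbar G r y)).Nonempty}

/-- `U₀ = {u ∈ U | u ∉ N(x) ∪ N(y)}`. -/
def U0set {V : Type*} (G : SimpleGraph V) (r x y : V) : Set V :=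
  {u ∈ Uset G r x y | u ∉ G.neighborSet x ∪ G.neighborSet y}

/-- `U_x = {u ∈ U | u ∈ N(x) \\ N(y)}`. -/
def Uxset {V : Type*} (G : SimpleGraph V) (r x y : V) : Set V :=
  {u ∈ Uset G r x y | u ∈ G.neighborSet x \ G.neighborSet y}

/-- `U_y = {u ∈ U | u ∈ N(y) \\ N(x)}`. -/
def Uyset {V : Type*} (G : SimpleGraph V) (r x y : V) : Set V :=
  {u ∈ Uset G r x y | u ∈ G.neighborSet y \ G.neighborSet x}

/-- `W_x = N_r̄(x) \\ N_r̄(y)`. -/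
def Wx {V : Type*} (G : SimpleGraph V) (r x y : V) : Set V :=
  Nbar G r x \ Nbar G r y

/-- `W_y = N_r̄(y) \\ N_r̄(x)`. -/
def Wy {V : Type*} (G : SimpleGraph V) (r x y : V) : Set V :=
  Nbar G r y \ Nbar G r x

/-- `W_xy = N_r̄(x) ∩ N_r̄(y)`. -/
def Wxy {V : Type*} (G : SimpleGraph V) (r x y : V) : Set V :=
  Nbar G r x ∩ Nbar G r y

/-- `C` is a connected component of the subgraph of `G` induced by `A`:
`C ⊆ A`, `G[C]` is connected (hence nonempty), and `C` is maximal with this property. -/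
def IsCompOf {V : Type*} (G : SimpleGraph V) (A C : Set V) : Prop :=
  C ⊆ A ∧ (G.induce C).Connected ∧
    ∀ C' : Set V, C ⊆ C' → C' ⊆ A → (G.induce C').Connected → C' = C

/-- The neighborhood of the vertex set `C` in the graph `G − r`: all vertices other than
`r`, outside of `C`, having a neighbor in `C`. -/
def nbhdIn {V : Type*} (G : SimpleGraph V) (r : V) (C : Set V) : Set V :=
  {w | w ≠ r ∧ w ∉ C ∧ ∃ c ∈ C, G.Adj c w}

lemma p5_of_path {V : Type} (G : SimpleGraph V) (a b c d e : V)
    (h1 : G.Adj a b) (h2 : G.Adj b c) (h3 : G.Adj c d) (h4 : G.Adj d e)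
    (n1 : ¬G.Adj a c) (n2 : ¬G.Adj a d) (n3 : ¬G.Adj a e)
    (n4 : ¬G.Adj b d) (n5 : ¬G.Adj b e) (n6 : ¬G.Adj c e) :
    Nonempty (pathGraph 5 ↪g G) := by
  have hab := h1.ne
  have hac : a ≠ c := by rintro rfl; exact n2 h3
  have had : a ≠ d := by rintro rfl; exact n3 h4
  have hae : a ≠ e := by rintro rfl; exact n2 h4.symm
  have hbc := h2.ne
  have hbd : b ≠ d := by rintro rfl; exact n5 h4
  have hbe : b ≠ e := by rintro rfl; exact n4 h4.symm
  have hcd := h3.ne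
  have hce : c ≠ e := by rintro rfl; exact n5 h2
  have hde := h4.ne
  have n1' : ¬G.Adj c a := fun h => n1 h.symm
  have n2' : ¬G.Adj d a := fun h => n2 h.symm
  have n3' : ¬G.Adj e a := fun h => n3 h.symm
  have n4' : ¬G.Adj d b := fun h => n4 h.symm
  have n5' : ¬G.Adj e b := fun h => n5 h.symm
  have n6' : ¬G.Adj e c := fun h => n6 h.symm
  refine ⟨⟨⟨![a,b,c,d,e], ?_⟩, ?_⟩⟩
  · intro i j hij
    fin_cases i <;> fin_cases j <;>
      simp_all [hab, hac, had, hae, hbc, hbd, hbe, hcd, hce, hde,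
        hab.symm, hac.symm, had.symm, hae.symm, hbc.symm, hbd.symm, hbe.symm,
        hcd.symm, hce.symm, hde.symm]
  · intro i j
    show G.Adj (![a,b,c,d,e] i) (![a,b,c,d,e] j) ↔ _
    fin_cases i <;> fin_cases j <;>
      simp [pathGraph_adj, h1, h2, h3, h4, h1.symm, h2.symm, h3.symm, h4.symm,
        n1, n2, n3, n4, n5, n6, n1', n2', n3', n4', n5', n6'] <;> decide

/-- Let `G` be `P₅`-free, `r ∈ V(G)`, and `x, y` two distinct nonadjacent
neighbors of `r`. Then for every connected component `C` of `G' − M`, the neighborhood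
`N(C)` of `C` is contained in `U ∪ W_xy`. -/
theorem stmt_12 {V : Type} [Fintype V] (G : SimpleGraph V)
    (hP5 : _root_.Free (pathGraph 5) G)
    (r x y : V) (hrx : G.Adj r x) (hry : G.Adj r y) (hxy : x ≠ y) (hnadj : ¬ G.Adj x y)
    (C : Set V) (hC : IsCompOf G (({r} ∪ Mset G r x y)ᶜ) C) :
    nbhdIn G r C ⊆ Uset G r x y ∪ Wxy G r x y := by
  obtain ⟨hCsub, hCconn, hCmax⟩ := hC
  intro w hw
  obtain ⟨hwr, hwC, c, hcC, hcw⟩ := hw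
  have hcA := hCsub hcC
  simp only [Set.mem_compl_iff, Set.mem_union, Set.mem_singleton_iff, not_or] at hcA
  obtain ⟨hcr, hcM⟩ := hcA
  simp only [Mset, Set.mem_union, not_or] at hcM
  obtain ⟨⟨hcNr, hcNx⟩, hcNy⟩ := hcM
  have hcNr' : ¬ G.Adj r c := by simpa using hcNr
  have hcNcl : c ∉ closedNbhd G r := by
    simp [closedNbhd, hcr, hcNr']
  have hcx : ¬ G.Adj x c := fun h => hcNx ⟨h, hcNcl⟩
  have hcy : ¬ G.Adj y c := fun h => hcNy ⟨h, hcNcl⟩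
  -- w must be in M, otherwise we could enlarge C
  have hwM : w ∈ Mset G r x y := by
    by_contra hwM
    have hwA : w ∈ ({r} ∪ Mset G r x y)ᶜ := by
      simp only [Set.mem_compl_iff, Set.mem_union, Set.mem_singleton_iff, not_or]
      exact ⟨hwr, hwM⟩
    have hconn : (G.induce (insert w C)).Connected := by
      let φ : G.induce C →g G.induce (insert w C) :=
        ⟨fun v => ⟨v.1, Set.mem_insert_of_mem _ v.2⟩, fun {a b} h => h⟩
      rw [SimpleGraph.connected_iff]
      refine ⟨?_, ⟨⟨c, Set.mem_insert_of_mem _ hcC⟩⟩⟩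
      have key : ∀ v : (insert w C : Set V), (G.induce (insert w C)).Reachable v
          ⟨c, Set.mem_insert_of_mem _ hcC⟩ := by
        rintro ⟨v, hv⟩
        rcases hv with rfl | hv
        · exact SimpleGraph.Adj.reachable (by exact hcw.symm)
        · exact (hCconn.preconnected ⟨v, hv⟩ ⟨c, hcC⟩).map φ
      intro u v
      exact (key u).trans (key v).symm
    have heq := hCmax (insert w C) (Set.subset_insert w C)
      (Set.insert_subset hwA hCsub) hconn
    exact hwC (heq ▸ Set.mem_insert w C)
  simp only [Mset, Set.mem_union] at hwM
  rcases hwM with (hwNr | hwNx) | hwNy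
  · -- w ∈ N(r) : then w ∈ U with witness c
    left
    refine ⟨hwNr, c, ⟨hcw.symm, hcNcl⟩, ?_⟩
    rintro (⟨h, -⟩ | ⟨h, -⟩)
    · exact hcNx ⟨h, hcNcl⟩
    · exact hcNy ⟨h, hcNcl⟩
  · -- w ∈ N̄(x)
    obtain ⟨hwx, hwcl⟩ := hwNx
    have hnrw : ¬ G.Adj r w := fun h => hwcl (Or.inr h)
    by_cases hwy : G.Adj y w
    · exact Or.inr ⟨⟨hwx, hwcl⟩, ⟨hwy, hwcl⟩⟩
    · exfalso
      obtain ⟨emb⟩ := p5_of_path G c w x r y hcw (show G.Adj x w from hwx).symm hrx.symm hry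
        (fun h => hcx h.symm) (fun h => hcNr' h.symm) (fun h => hcy h.symm)
        (fun h => hnrw h.symm) (fun h => hwy h.symm) hnadj
      exact hP5.false emb
  · -- w ∈ N̄(y)
    obtain ⟨hwy, hwcl⟩ := hwNy
    have hnrw : ¬ G.Adj r w := fun h => hwcl (Or.inr h)
    by_cases hwx : G.Adj x w
    · exact Or.inr ⟨⟨hwx, hwcl⟩, ⟨hwy, hwcl⟩⟩
    · exfalso
      obtain ⟨emb⟩ := p5_of_path G c w y r x hcw (show G.Adj y w from hwy).symm hry.symm hrx
        (fun h => hcy h.symm) (fun h => hcNr' h.symm) (fun h => hcx h.symm)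
        (fun h => hnrw h.symm) (fun h => hwx h.symm) (fun h => hnadj h.symm)
      exact hP5.false emb
end

section
/- Let G be a P₅-free graph, let r ∈ V(G), and let x, y be two distinct nonadjacent neighbors of r. Then every connected component C of G' − M is complete to N(C) ∩ (U₀ ∪ U_x ∪ U_y). -/
open SimpleGraph

private lemma mkP5 {V : Type} (G : SimpleGraph V)
    (hP5 : IsEmpty (pathGraph 5 ↪g G)) (a b u r z : V)
    (hab : G.Adj a b) (hbu : G.Adj b u) (hur : G.Adj u r) (hrz : G.Adj r z)
    (hau : ¬ G.Adj a u) (har : ¬ G.Adj a r) (haz : ¬ G.Adj a z)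
    (hbr : ¬ G.Adj b r) (hbz : ¬ G.Adj b z) (huz : ¬ G.Adj u z) : False := by
  have hne_ab : a ≠ b := hab.ne
  have hne_bu : b ≠ u := hbu.ne
  have hne_ur : u ≠ r := hur.ne
  have hne_rz : r ≠ z := hrz.ne
  have hne_au : a ≠ u := fun h => har (by subst h; exact hur)
  have hne_ar : a ≠ r := fun h => haz (by subst h; exact hrz)
  have hne_az : a ≠ z := fun h => har (by subst h; exact hrz.symm)
  have hne_br : b ≠ r := fun h => hbz (by subst h; exact hrz)
  have hne_bz : b ≠ z := fun h => huz (by subst h; exact hbu.symm)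
  have hne_uz : u ≠ z := fun h => hbz (by subst h; exact hbu)
  have hba := hab.symm
  have hub := hbu.symm
  have hru := hur.symm
  have hzr := hrz.symm
  have hua : ¬ G.Adj u a := fun h => hau h.symm
  have hra : ¬ G.Adj r a := fun h => har h.symm
  have hza : ¬ G.Adj z a := fun h => haz h.symm
  have hrb : ¬ G.Adj r b := fun h => hbr h.symm
  have hzb : ¬ G.Adj z b := fun h => hbz h.symm
  have hzu : ¬ G.Adj z u := fun h => huz h.symm
  refine hP5.false ⟨⟨![a,b,u,r,z], ?_⟩, ?_⟩
  · intro i j hij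
    fin_cases i <;> fin_cases j <;> simp_all
  · intro i j
    fin_cases i <;> fin_cases j <;>
      simp [pathGraph_adj] <;>
      first
        | assumption
        | exact fun h => G.irrefl h
        | (refine iff_of_false ?_ (by decide); assumption)
        | (refine iff_of_true ?_ (by decide); assumption)

private lemma find_edge {V : Type} (G : SimpleGraph V) (C : Set V) (u : V) :
    ∀ {a b : C}, (G.induce C).Walk a b → G.Adj u a → ¬ G.Adj u b →
      ∃ c₁ c₂, c₁ ∈ C ∧ c₂ ∈ C ∧ G.Adj c₁ c₂ ∧ G.Adj u c₁ ∧ ¬ G.Adj u c₂ := by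
  intro a b w
  induction w with
  | nil => intro h1 h2; exact absurd h1 h2
  | @cons a m b h p ih =>
      intro h1 h2
      by_cases hm : G.Adj u m
      · exact ih hm h2
      · exact ⟨a, m, a.2, m.2, h, h1, hm⟩

/-- Let `G` be `P₅`-free, `r ∈ V(G)`, and `x, y` two distinct nonadjacent
neighbors of `r`. Then every connected component `C` of `G' − M` is complete to
`N(C) ∩ (U₀ ∪ U_x ∪ U_y)`. -/
theorem stmt_13 {V : Type} [Fintype V] (G : SimpleGraph V)
    (hP5 : _root_.Free (pathGraph 5) G)
    (r x y : V) (hrx : G.Adj r x) (hry : G.Adj r y) (hxy : x ≠ y) (hnadj : ¬ G.Adj x y)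
    (C : Set V) (hC : IsCompOf G (({r} ∪ Mset G r x y)ᶜ) C) :
    ∀ c ∈ C, ∀ u ∈ nbhdIn G r C ∩ (U0set G r x y ∪ Uxset G r x y ∪ Uyset G r x y),
      G.Adj c u := by
  intro c hc u hu
  by_contra hcu
  obtain ⟨hCsub, hCconn, -⟩ := hC
  have cfact : ∀ d ∈ C, d ≠ r ∧ ¬ G.Adj r d ∧ ¬ G.Adj x d ∧ ¬ G.Adj y d := by
    intro d hd
    have h := hCsub hd
    simp only [Set.mem_compl_iff, Set.mem_union, Mset, Nbar, closedNbhd,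
      Set.mem_singleton_iff, Set.mem_diff, Set.mem_insert_iff, mem_neighborSet,
      not_or] at h
    obtain ⟨hdr, ⟨hrN, hx⟩, hy⟩ := h
    refine ⟨hdr, hrN, ?_, ?_⟩
    · intro hxd; exact hx ⟨hxd, by simp [hdr, hrN]⟩
    · intro hyd; exact hy ⟨hyd, by simp [hdr, hrN]⟩
  obtain ⟨hnb, hU⟩ := hu
  obtain ⟨hur', hunC, c₀, hc₀, hc₀u⟩ := hnb
  simp only [U0set, Uxset, Uyset, Uset, Set.mem_setOf_eq, Set.mem_union,
    Set.mem_diff, mem_neighborSet, not_or] at hU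
  obtain ⟨hru, z, hrz, huz, hznon⟩ :
      G.Adj r u ∧ ∃ z, G.Adj r z ∧ ¬ G.Adj u z ∧ ∀ d ∈ C, ¬ G.Adj z d := by
    rcases hU with (⟨⟨hrN, -⟩, hnx, -⟩ | ⟨⟨hrN, -⟩, -, hny⟩) | ⟨⟨hrN, -⟩, -, hnx⟩
    · exact ⟨hrN, x, hrx, fun h => hnx h.symm, fun d hd => (cfact d hd).2.2.1⟩
    · exact ⟨hrN, y, hry, fun h => hny h.symm, fun d hd => (cfact d hd).2.2.2⟩
    · exact ⟨hrN, x, hrx, fun h => hnx h.symm, fun d hd => (cfact d hd).2.2.1⟩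
  obtain ⟨w⟩ := hCconn ⟨c₀, hc₀⟩ ⟨c, hc⟩
  obtain ⟨c₁, c₂, hc₁, hc₂, h12, hu1, hu2⟩ :=
    find_edge G C u w hc₀u.symm (fun h => hcu h.symm)
  exact mkP5 G hP5 c₂ c₁ u r z h12.symm hu1.symm hru.symm hrz
    (fun h => hu2 h.symm) (fun h => (cfact c₂ hc₂).2.1 h.symm)
    (fun h => (hznon c₂ hc₂) h.symm) (fun h => (cfact c₁ hc₁).2.1 h.symm)
    (fun h => (hznon c₁ hc₁) h.symm) huz
end

section
/- Let ℓ be a positive integer, let G be a {P₅, K_{ℓ,ℓ}}-free graph, let r ∈ V(G), and let x, y be two distinct nonadjacent neighbors of r. Then either α(G[W_x]) ≤ ℓ−1 or α(G[W_y]) ≤ ℓ−1. -/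
open SimpleGraph

/-- Extract an independent set of exactly size `ℓ` when the independence number is at least `ℓ`. -/
lemma exists_indep_card {V : Type} [Fintype V] (G : SimpleGraph V) (S : Set V) {ℓ : ℕ}
    (h : ℓ ≤ indepNumOn G S) :
    ∃ s : Finset V, ↑s ⊆ S ∧ IndepSet G ↑s ∧ s.card = ℓ := by
  set T : Set ℕ := {n | ∃ s : Finset V, ↑s ⊆ S ∧ IndepSet G ↑s ∧ s.card = n} with hT
  have hne : T.Nonempty := ⟨0, ∅, by simp [IndepSet]⟩
  have hbdd : BddAbove T := by
    refine ⟨Fintype.card V, ?_⟩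
    rintro n ⟨s, -, -, rfl⟩
    exact s.card_le_univ.trans (le_of_eq (Finset.card_univ))
  have hmem : sSup T ∈ T := Nat.sSup_mem hne hbdd
  obtain ⟨s, hsS, hind, hcard⟩ := hmem
  have hls : ℓ ≤ s.card := by
    have : indepNumOn G S = sSup T := rfl
    omega
  obtain ⟨t, hts, htc⟩ := Finset.exists_subset_card_eq hls
  exact ⟨t, fun a ha => hsS (hts ha), hind.mono (by exact_mod_cast hts), htc⟩

lemma wx_props {V : Type} {G : SimpleGraph V} {r x y a : V} (ha : a ∈ Wx G r x y) :
    G.Adj x a ∧ ¬ G.Adj y a ∧ a ≠ r ∧ ¬ G.Adj r a := by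
  obtain ⟨⟨h1, h2⟩, h3⟩ := ha
  simp only [closedNbhd, Set.mem_insert_iff, SimpleGraph.mem_neighborSet, not_or] at h2
  refine ⟨h1, ?_, h2.1, h2.2⟩
  intro hya
  exact h3 ⟨hya, by simp only [closedNbhd, Set.mem_insert_iff, SimpleGraph.mem_neighborSet, not_or]; exact h2⟩

/-- Let `ℓ` be a positive integer, `G` a `{P₅, K_{ℓ,ℓ}}`-free graph,
`r ∈ V(G)`, and `x, y` two distinct nonadjacent neighbors of `r`. Then either
`α(G[W_x]) ≤ ℓ−1` or `α(G[W_y]) ≤ ℓ−1`. -/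
theorem stmt_15 (ℓ : ℕ) (hℓ : 0 < ℓ) {V : Type} [Fintype V] (G : SimpleGraph V)
    (hP5 : _root_.Free (pathGraph 5) G)
    (hK : _root_.Free (completeBipartiteGraph (Fin ℓ) (Fin ℓ)) G)
    (r x y : V) (hrx : G.Adj r x) (hry : G.Adj r y) (hxy : x ≠ y) (hnadj : ¬ G.Adj x y) :
    indepNumOn G (Wx G r x y) ≤ ℓ - 1 ∨ indepNumOn G (Wy G r x y) ≤ ℓ - 1 := by
  by_contra hcon
  push_neg at hcon
  obtain ⟨h1, h2⟩ := hcon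
  have hwyx : Wy G r x y = Wx G r y x := rfl
  -- every vertex of Wx is adjacent to every vertex of Wy
  have key : ∀ a ∈ Wx G r x y, ∀ b ∈ Wy G r x y, G.Adj a b := by
    intro a ha b hb
    by_contra hab
    obtain ⟨hax, hay, harne, har⟩ := wx_props ha
    obtain ⟨hby, hbx, hbrne, hbr⟩ := wx_props (hwyx ▸ hb)
    have nax : a ≠ x := hax.ne'
    have nay : a ≠ y := fun h => hnadj (h ▸ hax)
    have nab : a ≠ b := fun h => hbx (h ▸ hax)
    have nxb : x ≠ b := fun h => hbr (h ▸ hrx)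
    have nyb : y ≠ b := hby.ne
    have har' : ¬ G.Adj a r := fun h => har h.symm
    have hay' : ¬ G.Adj a y := fun h => hay h.symm
    have hab' : ¬ G.Adj b a := fun h => hab h.symm
    have hnadj' : ¬ G.Adj y x := fun h => hnadj h.symm
    have hbx' : ¬ G.Adj b x := fun h => hbx h.symm
    have hbr' : ¬ G.Adj b r := fun h => hbr h.symm
    exact hP5.elim ⟨⟨![a, x, r, y, b], by
        intro i j hij
        fin_cases i <;> fin_cases j <;>
          simp_all [nax.symm, nay.symm, nab.symm, nxb.symm, nyb.symm, harne.symm,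
            hbrne.symm, hrx.ne, hry.ne, hxy.symm]⟩, by
      intro i j
      change G.Adj (![a, x, r, y, b] i) (![a, x, r, y, b] j) ↔ _
      fin_cases i <;> fin_cases j <;>
        simp [pathGraph_adj, (show (((0:Fin 5)):ℕ) = 0 from rfl),
          (show (((1:Fin 5)):ℕ) = 1 from rfl), (show (((2:Fin 5)):ℕ) = 2 from rfl),
          (show (((3:Fin 5)):ℕ) = 3 from rfl), (show (((4:Fin 5)):ℕ) = 4 from rfl),
          hax, hax.symm, hrx, hrx.symm, hry, hry.symm, hby, hby.symm,
          har, har', hay, hay', hab, hab', hnadj, hnadj', hbx, hbx', hbr, hbr', G.irrefl]⟩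
  have hlx : ℓ ≤ indepNumOn G (Wx G r x y) := by omega
  have hly : ℓ ≤ indepNumOn G (Wy G r x y) := by omega
  obtain ⟨sA, hsA, hindA, hcardA⟩ := exists_indep_card G _ hlx
  obtain ⟨sB, hsB, hindB, hcardB⟩ := exists_indep_card G _ hly
  let fA : Fin ℓ → V := fun i => ((sA.equivFinOfCardEq hcardA).symm i : V)
  let fB : Fin ℓ → V := fun i => ((sB.equivFinOfCardEq hcardB).symm i : V)
  have hfA : ∀ i, fA i ∈ Wx G r x y := fun i => hsA ((sA.equivFinOfCardEq hcardA).symm i).2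
  have hfB : ∀ i, fB i ∈ Wy G r x y := fun i => hsB ((sB.equivFinOfCardEq hcardB).symm i).2
  have hfAinj : Function.Injective fA := fun i j h =>
    (Equiv.injective _) (Subtype.ext h : _)
  have hfBinj : Function.Injective fB := fun i j h =>
    (Equiv.injective _) (Subtype.ext h : _)
  have hABne : ∀ i j, fA i ≠ fB j := by
    intro i j h
    have h1 := (wx_props (hfA i)).1
    have h2 := (wx_props (hwyx ▸ hfB j)).2.1
    exact h2 (h ▸ h1)
  have hAA : ∀ i j : Fin ℓ, ¬ G.Adj (fA i) (fA j) := by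
    intro i j hadj
    rcases eq_or_ne i j with rfl | hij
    · exact G.irrefl hadj
    · exact hindA ((sA.equivFinOfCardEq hcardA).symm i).2
        ((sA.equivFinOfCardEq hcardA).symm j).2 (fun h => hij (hfAinj h)) hadj
  have hBB : ∀ i j : Fin ℓ, ¬ G.Adj (fB i) (fB j) := by
    intro i j hadj
    rcases eq_or_ne i j with rfl | hij
    · exact G.irrefl hadj
    · exact hindB ((sB.equivFinOfCardEq hcardB).symm i).2
        ((sB.equivFinOfCardEq hcardB).symm j).2 (fun h => hij (hfBinj h)) hadj
  exact hK.elim ⟨⟨Sum.elim fA fB, by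
      rintro (i | i) (j | j) h
      · exact congrArg Sum.inl (hfAinj h)
      · exact absurd h (hABne i j)
      · exact absurd h.symm (hABne j i)
      · exact congrArg Sum.inr (hfBinj h)⟩, by
    intro p q
    change G.Adj (Sum.elim fA fB p) (Sum.elim fA fB q) ↔ _
    rcases p with i | i <;> rcases q with j | j <;>
      simp [hAA, hBB, key _ (hfA _) _ (hfB _), (key _ (hfA _) _ (hfB _)).symm]⟩
end

section
/- Let G be a P₅-free graph, let r ∈ V(G), and let x, y be two distinct nonadjacent neighbors of r. Then U_x is complete to U_y, i.e., every vertex u ∈ N(r) adjacent to x but not to y and having a neighbor outside M ∪ {r} is adjacent to every vertex u' ∈ N(r) adjacent to y but not to x and having a neighbor outside M ∪ {r}. -/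
open SimpleGraph

lemma P5_of_path {V : Type} (G : SimpleGraph V) {a b c d e : V}
    (hab : G.Adj a b) (hbc : G.Adj b c) (hcd : G.Adj c d) (hde : G.Adj d e)
    (hac : ¬G.Adj a c) (had : ¬G.Adj a d) (hae : ¬G.Adj a e)
    (hbd : ¬G.Adj b d) (hbe : ¬G.Adj b e) (hce : ¬G.Adj c e)
    (nac : a ≠ c) (nad : a ≠ d) (nae : a ≠ e) (nbd : b ≠ d) (nbe : b ≠ e) (nce : c ≠ e) :
    Nonempty (pathGraph 5 ↪g G) := by
  have nab := G.ne_of_adj hab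
  have nbc := G.ne_of_adj hbc
  have ncd := G.ne_of_adj hcd
  have nde := G.ne_of_adj hde
  refine ⟨⟨⟨![a,b,c,d,e], ?_⟩, ?_⟩⟩
  · intro i j h
    fin_cases i <;> fin_cases j <;> simp_all <;> tauto
  · intro i j
    fin_cases i <;> fin_cases j <;>
      simp_all [pathGraph_adj, G.adj_symm, eq_comm] <;> tauto


/-- Let `G` be `P₅`-free, `r ∈ V(G)`, and `x, y` two distinct nonadjacent
neighbors of `r`. Then `U_x` is complete to `U_y`. -/
theorem stmt_16 {V : Type} [Fintype V] (G : SimpleGraph V)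
    (hP5 : _root_.Free (pathGraph 5) G)
    (r x y : V) (hrx : G.Adj r x) (hry : G.Adj r y) (hxy : x ≠ y) (hnadj : ¬ G.Adj x y) :
    ∀ u ∈ Uxset G r x y, ∀ u' ∈ Uyset G r x y, G.Adj u u' := by
  intro u hu u' hu'
  by_contra huu'
  obtain ⟨⟨hru, w, hw⟩, hxu, hyu⟩ := hu
  obtain ⟨⟨hru', w', hw'⟩, hyu', hxu'⟩ := hu'
  simp only [Nbar, closedNbhd, Set.mem_diff, Set.mem_union, Set.mem_insert_iff,
    mem_neighborSet, not_or] at hw hw' hxu hyu hxu' hyu'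
  obtain ⟨⟨huw, hwr, hwR⟩, hwxy⟩ := hw
  obtain ⟨⟨huw', hwr', hwR'⟩, hwxy'⟩ := hw'
  -- w not adjacent to x nor y
  have hwx : ¬ G.Adj x w := fun h => hwxy.1 ⟨h, hwr, hwR⟩
  have hwy : ¬ G.Adj y w := fun h => hwxy.2 ⟨h, hwr, hwR⟩
  have hwx' : ¬ G.Adj x w' := fun h => hwxy'.1 ⟨h, hwr', hwR'⟩
  have hwy' : ¬ G.Adj y w' := fun h => hwxy'.2 ⟨h, hwr', hwR'⟩
  simp only [mem_neighborSet] at hru hru' hxu hyu hxu' hyu'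
  -- hxu : G.Adj x u, hyu : ¬ G.Adj y u, hyu' : G.Adj y u', hxu' : ¬ G.Adj x u'
  -- distinctness facts
  have nxw : x ≠ w := fun h => hwR (h ▸ hrx)
  have nxw' : x ≠ w' := fun h => hwR' (h ▸ hrx)
  have nyw : y ≠ w := fun h => hwR (h ▸ hry)
  have nyw' : y ≠ w' := fun h => hwR' (h ▸ hry)
  have nxu' : x ≠ u' := fun h => hnadj ((h ▸ hyu' : G.Adj y x).symm)
  have nyu : y ≠ u := fun h => hnadj (h ▸ hxu)
  have nuu' : u ≠ u' := fun h => hxu' (h ▸ hxu)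
  have nuw' : u ≠ w' := fun h => hwR' (h ▸ hru)
  have nwu' : w ≠ u' := fun h => hwR ((h ▸ hru' : G.Adj r w))
  by_cases hA : G.Adj w u'
  · -- path x - u - w - u' - y
    exact (P5_of_path G hxu huw hA hyu'.symm
      hwx hxu' hnadj huu' (fun h => hyu h.symm) (fun h => hwy h.symm)
      nxw nxu' hxy nuu' nyu.symm nyw.symm).elim hP5.false
  by_cases hB : G.Adj w' u
  · -- path y - u' - w' - u - x
    exact (P5_of_path G hyu' huw' hB hxu.symm
      hwy' hyu (fun h => hnadj h.symm) (fun h => huu' h.symm)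
      (fun h => hxu' h.symm) (fun h => hwx' h.symm)
      nyw' nyu hxy.symm nuu'.symm nxu'.symm nxw'.symm).elim hP5.false
  by_cases hC : G.Adj w w'
  · -- path x - u - w - w' - u'
    exact (P5_of_path G hxu huw hC huw'.symm
      hwx hwx' hxu' (fun h => hB h.symm) huu' hA
      nxw nxw' nxu' nuw' nuu' nwu').elim hP5.false
  · -- path w - u - r - u' - w'
    have nww' : w ≠ w' := by rintro rfl; exact hB huw.symm
    exact (P5_of_path G huw.symm hru.symm hru' huw'
      (fun h => hwR h.symm) hA hC huu' (fun h => hB h.symm) hwR'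
      hwr nwu' nww' nuu' nuw' (Ne.symm hwr')).elim hP5.false
end

section
/- Let G be a P₅-free graph, let r ∈ V(G), and let x, y be two distinct nonadjacent neighbors of r. Then for every u ∈ U: if u is not adjacent to x, then u is complete to W_x, and if u is not adjacent to y, then u is complete to W_y. In particular, U₀ is complete to W_x ∪ W_y, U_x is complete to W_y, and U_y is complete to W_x. -/
open SimpleGraph

lemma p5_embed_s17 {V : Type} (G : SimpleGraph V) (a b c d e : V)
    (hab : G.Adj a b) (hbc : G.Adj b c) (hcd : G.Adj c d) (hde : G.Adj d e)
    (hac : ¬ G.Adj a c) (had : ¬ G.Adj a d) (hae : ¬ G.Adj a e)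
    (hbd : ¬ G.Adj b d) (hbe : ¬ G.Adj b e) (hce : ¬ G.Adj c e)
    (nac : a ≠ c) (nad : a ≠ d) (nae : a ≠ e) (nbd : b ≠ d) (nbe : b ≠ e)
    (nce : c ≠ e) : ¬ _root_.Free (pathGraph 5) G := by
  intro hF
  have nab := hab.ne
  have nbc := hbc.ne
  have ncd := hcd.ne
  have nde := hde.ne
  have hca := fun h => hac (G.adj_symm h)
  have hda := fun h => had (G.adj_symm h)
  have hea := fun h => hae (G.adj_symm h)
  have hdb := fun h => hbd (G.adj_symm h)
  have heb := fun h => hbe (G.adj_symm h)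
  have hec := fun h => hce (G.adj_symm h)
  have hba := G.adj_symm hab
  have hcb := G.adj_symm hbc
  have hdc := G.adj_symm hcd
  have hed := G.adj_symm hde
  refine hF.false ⟨⟨![a,b,c,d,e], ?_⟩, ?_⟩
  · intro i j h
    fin_cases i <;> fin_cases j <;>
      simp_all [nab, nbc, ncd, nde, nac, nad, nae, nbd, nbe, nce,
        nab.symm, nbc.symm, ncd.symm, nde.symm, nac.symm, nad.symm, nae.symm,
        nbd.symm, nbe.symm, nce.symm]
  · intro i j
    change G.Adj (![a,b,c,d,e] i) (![a,b,c,d,e] j) ↔ _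
    fin_cases i <;> fin_cases j <;>
      simp_all [pathGraph_adj, G.irrefl] <;> decide

lemma key_lemma {V : Type} (G : SimpleGraph V)
    (hP5 : _root_.Free (pathGraph 5) G)
    (r x y : V) (hrx : G.Adj r x) (hry : G.Adj r y) (hxy : x ≠ y)
    (hnadj : ¬ G.Adj x y)
    (u : V) (hu : u ∈ Uset G r x y) (hux : ¬ G.Adj u x) :
    ∀ w ∈ Wx G r x y, G.Adj u w := by
  obtain ⟨hur, z, ⟨huz, hzc⟩, hz2⟩ := hu
  have hur' : G.Adj r u := hur
  have huz : G.Adj u z := huz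
  have hzr : z ≠ r := fun h => hzc (h ▸ Set.mem_insert _ _)
  have hzr' : ¬ G.Adj r z := fun h => hzc (Set.mem_insert_of_mem _ h)
  have hzx : ¬ G.Adj x z := fun h => hz2 (Or.inl ⟨h, hzc⟩)
  have hzy : ¬ G.Adj y z := fun h => hz2 (Or.inr ⟨h, hzc⟩)
  intro w hw
  obtain ⟨⟨hxw, hwc⟩, hw2⟩ := hw
  have hxw : G.Adj x w := hxw
  have hwr : w ≠ r := fun h => hwc (h ▸ Set.mem_insert _ _)
  have hwr' : ¬ G.Adj r w := fun h => hwc (Set.mem_insert_of_mem _ h)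
  have hyw : ¬ G.Adj y w := fun h => hw2 ⟨h, hwc⟩
  by_contra huw
  -- distinctness facts
  have nux : u ≠ x := fun h => hzx (h ▸ huz)
  have nuy : u ≠ y := fun h => hzy (h ▸ huz)
  have nzw : z ≠ w := fun h => hzx (h ▸ hxw)
  have nzx : z ≠ x := fun h => hzr' (h ▸ hrx)
  have nzy : z ≠ y := fun h => hzr' (h ▸ hry)
  have nuw : u ≠ w := fun h => hwr' (h ▸ hur')
  have nwy : w ≠ y := fun h => hnadj (h ▸ hxw)
  by_cases hzw : G.Adj z w
  · by_cases huy : G.Adj u y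
    · -- P5 : x - w - z - u - y
      exact p5_embed_s17 G x w z u y hxw (G.adj_symm hzw) (G.adj_symm huz) huy
        hzx (fun h => hux (G.adj_symm h)) hnadj (fun h => huw (G.adj_symm h))
        (fun h => hyw (G.adj_symm h)) (fun h => hzy (G.adj_symm h))
        nzx.symm nux.symm hxy nuw.symm nwy nzy hP5
    · -- P5 : w - z - u - r - y
      exact p5_embed_s17 G w z u r y (G.adj_symm hzw) (G.adj_symm huz) (G.adj_symm hur') hry
        (fun h => huw (G.adj_symm h)) (fun h => hwr' (G.adj_symm h)) (fun h => hyw (G.adj_symm h))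
        (fun h => hzr' (G.adj_symm h)) (fun h => hzy (G.adj_symm h)) huy
        nuw.symm hwr nwy hzr nzy nuy hP5
  · -- P5 : z - u - r - x - w
    exact p5_embed_s17 G z u r x w (G.adj_symm huz) (G.adj_symm hur') hrx hxw
      (fun h => hzr' (G.adj_symm h)) (fun h => hzx (G.adj_symm h)) hzw
      hux huw hwr'
      hzr nzx nzw nux nuw hwr.symm hP5

/-- Let `G` be `P₅`-free, `r ∈ V(G)`, and `x, y` two distinct nonadjacent
neighbors of `r`. Then for every `u ∈ U`: if `u` is not adjacent to `x`, then `u` is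
complete to `W_x`, and if `u` is not adjacent to `y`, then `u` is complete to `W_y`.
In particular, `U₀` is complete to `W_x ∪ W_y`, `U_x` is complete to `W_y`, and `U_y`
is complete to `W_x`. -/
theorem stmt_17 {V : Type} [Fintype V] (G : SimpleGraph V)
    (hP5 : _root_.Free (pathGraph 5) G)
    (r x y : V) (hrx : G.Adj r x) (hry : G.Adj r y) (hxy : x ≠ y) (hnadj : ¬ G.Adj x y) :
    (∀ u ∈ Uset G r x y,
      (¬ G.Adj u x → ∀ w ∈ Wx G r x y, G.Adj u w) ∧
      (¬ G.Adj u y → ∀ w ∈ Wy G r x y, G.Adj u w)) ∧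
    (∀ u ∈ U0set G r x y, ∀ w ∈ Wx G r x y ∪ Wy G r x y, G.Adj u w) ∧
    (∀ u ∈ Uxset G r x y, ∀ w ∈ Wy G r x y, G.Adj u w) ∧
    (∀ u ∈ Uyset G r x y, ∀ w ∈ Wx G r x y, G.Adj u w) := by
  have hA : ∀ u ∈ Uset G r x y, ¬ G.Adj u x → ∀ w ∈ Wx G r x y, G.Adj u w :=
    fun u hu => key_lemma G hP5 r x y hrx hry hxy hnadj u hu
  have hB : ∀ u ∈ Uset G r x y, ¬ G.Adj u y → ∀ w ∈ Wy G r x y, G.Adj u w := by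
    intro u hu
    have hu' : u ∈ Uset G r y x := by
      obtain ⟨h1, z, hz1, hz2⟩ := hu
      exact ⟨h1, z, hz1, fun h => hz2 (Or.symm h)⟩
    exact key_lemma G hP5 r y x hry hrx hxy.symm (fun h => hnadj (G.adj_symm h)) u hu'
  refine ⟨fun u hu => ⟨hA u hu, hB u hu⟩, ?_, ?_, ?_⟩
  · rintro u ⟨hu, hn⟩ w (hw | hw)
    · exact hA u hu (fun h => hn (Or.inl (G.adj_symm h))) w hw
    · exact hB u hu (fun h => hn (Or.inr (G.adj_symm h))) w hw
  · rintro u ⟨hu, hm⟩ w hw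
    exact hB u hu (fun h => hm.2 (G.adj_symm h)) w hw
  · rintro u ⟨hu, hm⟩ w hw
    exact hA u hu (fun h => hm.2 (G.adj_symm h)) w hw
end
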